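/- arXiv:1204.2446 — 4 statements merged into one kernel-verified Lean document; each statement's English description precedes it below -/
import Mathlib

section
/- Let R ≥ 2 be an integer. The proportion of graphs G in G_{n,R} which have no vertex of degree strictly less than R−2 tends to 1 as n → ∞; that is, |{G ∈ G_{n,R} : every vertex of G has degree ≥ R−2}| / |G_{n,R}| → 1 as n → ∞. -/
open Filter Topology

/-- The degree of a vertex `v` in a simple graph `G`. -/
noncomputable def degS {n : ℕ} (G : SimpleGraph (Fin n)) (v : Fin n) : ℕ :=
  Set.ncard {w | G.Adj v w}

/-- The proportion of graphs on `{1,…,n}` with maximum degree at most `R`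
that satisfy the property `P`. -/
noncomputable def graphProp (n R : ℕ) (P : SimpleGraph (Fin n) → Prop) : ℝ :=
  (Nat.card {G : SimpleGraph (Fin n) // (∀ v, degS G v ≤ R) ∧ P G} : ℝ) /
  (Nat.card {G : SimpleGraph (Fin n) // ∀ v, degS G v ≤ R} : ℝ)

open Finset SimpleGraph

namespace StmtAux

variable {n : ℕ}

/-- neighbor set -/
abbrev nbr (G : SimpleGraph (Fin n)) (v : Fin n) : Set (Fin n) := {w | G.Adj v w}

noncomputable def dg (G : SimpleGraph (Fin n)) (v : Fin n) : ℕ := (nbr G v).ncard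

lemma degS_eq (G : SimpleGraph (Fin n)) (v : Fin n) : degS G v = dg G v := rfl

lemma dg_eq_degree (G : SimpleGraph (Fin n)) [DecidableRel G.Adj] (v : Fin n) :
    dg G v = G.degree v := by
  rw [dg, SimpleGraph.degree, SimpleGraph.neighborFinset]
  rw [show nbr G v = G.neighborSet v from rfl, Set.ncard_eq_toFinset_card']

lemma dg_mono_le {G H : SimpleGraph (Fin n)} (h : ∀ x y, G.Adj x y → H.Adj x y) (v : Fin n) :
    dg G v ≤ dg H v :=
  Set.ncard_le_ncard (fun w hw => h v w hw) (Set.toFinite _)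

lemma dg_deleteEdges_le (G : SimpleGraph (Fin n)) (s : Set (Sym2 (Fin n))) (v : Fin n) :
    dg (G.deleteEdges s) v ≤ dg G v := by
  apply dg_mono_le
  intro x y hxy
  rw [SimpleGraph.deleteEdges_adj] at hxy
  exact hxy.1

lemma dg_le_sup_edge (G : SimpleGraph (Fin n)) (a b v : Fin n) :
    dg G v ≤ dg (G ⊔ edge a b) v := by
  apply dg_mono_le
  intro x y hxy
  exact Or.inl hxy

lemma dg_sup_edge_same (G : SimpleGraph (Fin n)) {a b : Fin n} (hab : a ≠ b)
    (hnadj : ¬ G.Adj a b) : dg (G ⊔ edge a b) a = dg G a + 1 := by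
  have h : nbr (G ⊔ edge a b) a = insert b (nbr G a) := by
    ext w
    simp only [nbr, Set.mem_setOf_eq, SimpleGraph.sup_adj, SimpleGraph.edge_adj,
      Set.mem_insert_iff]
    aesop
  rw [dg, h, Set.ncard_insert_of_notMem (show b ∉ nbr G a from hnadj) (Set.toFinite _), dg]

lemma dg_sup_edge_other (G : SimpleGraph (Fin n)) {a b v : Fin n} (hv1 : v ≠ a) (hv2 : v ≠ b) :
    dg (G ⊔ edge a b) v = dg G v := by
  have h : nbr (G ⊔ edge a b) v = nbr G v := by
    ext w
    simp only [nbr, Set.mem_setOf_eq, SimpleGraph.sup_adj, SimpleGraph.edge_adj]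
    aesop
  rw [dg, h, dg]

lemma edge_comm' (a b : Fin n) : (edge a b : SimpleGraph (Fin n)) = edge b a := by
  ext x y
  rw [SimpleGraph.edge_adj, SimpleGraph.edge_adj]
  tauto

lemma dg_deleteEdge_same (G : SimpleGraph (Fin n)) {a b : Fin n} (hadj : G.Adj a b) :
    dg (G.deleteEdges {s(a, b)}) a + 1 = dg G a := by
  have h : nbr (G.deleteEdges {s(a, b)}) a = nbr G a \ {b} := by
    ext w
    simp only [nbr, Set.mem_setOf_eq, SimpleGraph.deleteEdges_adj, Set.mem_singleton_iff,
      Sym2.eq_iff, Set.mem_diff]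
    have := hadj.ne
    aesop
  rw [dg, h, dg, Set.ncard_diff_singleton_add_one (show b ∈ nbr G a from hadj) (Set.toFinite _)]

lemma dg_deleteEdge_other (G : SimpleGraph (Fin n)) {a b v : Fin n} (hv1 : v ≠ a) (hv2 : v ≠ b) :
    dg (G.deleteEdges {s(a, b)}) v = dg G v := by
  have h : nbr (G.deleteEdges {s(a, b)}) v = nbr G v := by
    ext w
    simp only [nbr, Set.mem_setOf_eq, SimpleGraph.deleteEdges_adj, Set.mem_singleton_iff,
      Sym2.eq_iff]
    aesop
  rw [dg, h, dg]

/-- delete-then-add recovers the graph -/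
lemma delete_sup (G : SimpleGraph (Fin n)) {a b : Fin n} (hadj : G.Adj a b) :
    (G.deleteEdges {s(a, b)}) ⊔ edge a b = G := by
  have hab := hadj.ne
  have hba := hadj.symm
  ext x y
  simp only [SimpleGraph.sup_adj, SimpleGraph.deleteEdges_adj, SimpleGraph.edge_adj,
    Set.mem_singleton_iff, Sym2.eq_iff]
  constructor
  · rintro (⟨h1, -⟩ | ⟨⟨h1, h2⟩ | ⟨h1, h2⟩, -⟩)
    · exact h1
    · rw [h1, h2]; exact hadj
    · rw [h1, h2]; exact hba
  · intro h
    by_cases hp : (x = a ∧ y = b) ∨ (x = b ∧ y = a)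
    · exact Or.inr ⟨hp, h.ne⟩
    · exact Or.inl ⟨h, hp⟩

/-- add-then-delete recovers the graph -/
lemma sup_delete (G : SimpleGraph (Fin n)) {a b : Fin n} (hnadj : ¬ G.Adj a b) :
    (G ⊔ edge a b).deleteEdges {s(a, b)} = G := by
  have hnba : ¬ G.Adj b a := fun h => hnadj h.symm
  ext x y
  simp only [SimpleGraph.deleteEdges_adj, SimpleGraph.sup_adj, SimpleGraph.edge_adj,
    Set.mem_singleton_iff, Sym2.eq_iff]
  constructor
  · rintro ⟨h1 | ⟨hp, -⟩, h2⟩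
    · exact h1
    · exact absurd hp h2
  · intro h
    refine ⟨Or.inl h, ?_⟩
    rintro (⟨h1, h2⟩ | ⟨h1, h2⟩)
    · exact hnadj (h1 ▸ h2 ▸ h)
    · exact hnba (h1 ▸ h2 ▸ h)



attribute [local instance] Classical.propDecidable

noncomputable def lowF (R : ℕ) (G : SimpleGraph (Fin n)) : ℕ :=
  #(Finset.univ.filter fun v => dg G v < R)

noncomputable def eC (G : SimpleGraph (Fin n)) : ℕ := G.edgeSet.ncard

lemma sum_dg (G : SimpleGraph (Fin n)) : ∑ v, dg G v = 2 * eC G := by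
  letI : DecidableRel G.Adj := fun a b => Classical.propDecidable _
  have h1 : ∑ v, dg G v = ∑ v, G.degree v :=
    Finset.sum_congr rfl fun v _ => dg_eq_degree G v
  rw [h1, SimpleGraph.sum_degrees_eq_twice_card_edges, eC, SimpleGraph.edgeFinset,
    Set.ncard_eq_toFinset_card']

lemma eC_lower (R : ℕ) (G : SimpleGraph (Fin n)) : R * (n - lowF R G) ≤ 2 * eC G := by
  rw [← sum_dg]
  have h1 : #(Finset.univ.filter fun v => dg G v < R)
      + #(Finset.univ.filter fun v => ¬ dg G v < R) = n := by
    rw [Finset.card_filter_add_card_filter_not]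
    simp
  have h2 : n - lowF R G = #(Finset.univ.filter fun v => ¬ dg G v < R) := by
    rw [lowF]; omega
  rw [h2]
  calc R * #(Finset.univ.filter fun v => ¬ dg G v < R)
      = ∑ _v ∈ Finset.univ.filter fun v => ¬ dg G v < R, R := by
        rw [Finset.sum_const, smul_eq_mul, mul_comm]
    _ ≤ ∑ v ∈ Finset.univ.filter fun v => ¬ dg G v < R, dg G v := by
        apply Finset.sum_le_sum
        intro i hi
        simp only [Finset.mem_filter] at hi
        omega
    _ ≤ ∑ v, dg G v := Finset.sum_le_sum_of_subset (Finset.filter_subset _ _)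

lemma dg_eq_filter (G : SimpleGraph (Fin n)) (v : Fin n) :
    dg G v = #(Finset.univ.filter fun w => G.Adj v w) := by
  rw [dg, Set.ncard_eq_toFinset_card']
  congr 1
  ext w
  simp [nbr]

lemma card_le_of_subset_pair {S T : Finset (Fin n)} {a b : Fin n}
    (h : ∀ w ∈ S, w ≠ a → w ≠ b → w ∈ T) : #S ≤ #T + 2 := by
  have hsub : S ⊆ T ∪ {a, b} := by
    intro w hw
    rw [Finset.mem_union, Finset.mem_insert, Finset.mem_singleton]
    by_cases h1 : w = a
    · exact Or.inr (Or.inl h1)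
    by_cases h2 : w = b
    · exact Or.inr (Or.inr h2)
    · exact Or.inl (h w hw h1 h2)
  calc #S ≤ #(T ∪ ({a, b} : Finset (Fin n))) := Finset.card_le_card hsub
    _ ≤ #T + #({a, b} : Finset (Fin n)) := Finset.card_union_le _ _
    _ ≤ #T + 2 := by
        have : #({a, b} : Finset (Fin n)) ≤ 2 := Finset.card_insert_le a {b} |>.trans (by simp)
        omega

lemma low_sup (R : ℕ) (G : SimpleGraph (Fin n)) (a b : Fin n) :
    lowF R G ≤ lowF R (G ⊔ edge a b) + 2 := by
  rw [lowF, lowF]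
  apply card_le_of_subset_pair (a := a) (b := b)
  intro w hw h1 h2
  simp only [Finset.mem_filter, Finset.mem_univ, true_and] at *
  rw [dg_sup_edge_other G h1 h2]
  exact hw

lemma low_del (R : ℕ) (G : SimpleGraph (Fin n)) (a b : Fin n) :
    lowF R (G.deleteEdges {s(a, b)}) ≤ lowF R G + 2 := by
  rw [lowF, lowF]
  apply card_le_of_subset_pair (a := a) (b := b)
  intro w hw h1 h2
  simp only [Finset.mem_filter, Finset.mem_univ, true_and] at *
  rw [← dg_deleteEdge_other G h1 h2]
  exact hw



noncomputable def gsetF (n R : ℕ) : Finset (SimpleGraph (Fin n)) :=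
  Finset.univ.filter fun G => ∀ w, dg G w ≤ R

noncomputable def Aset (R m k : ℕ) (v : Fin n) : Finset (SimpleGraph (Fin n)) :=
  Finset.univ.filter fun G => (∀ w, dg G w ≤ R) ∧ dg G v = k ∧ m ≤ lowF R G + 2 * k

def rAdd (R : ℕ) (v : Fin n) (G G' : SimpleGraph (Fin n)) : Prop :=
  ∃ x, x ≠ v ∧ ¬ G.Adj v x ∧ dg G x < R ∧ G' = G ⊔ edge v x

lemma mem_Aset {R m k : ℕ} {v : Fin n} {G : SimpleGraph (Fin n)} :
    G ∈ Aset R m k v ↔ (∀ w, dg G w ≤ R) ∧ dg G v = k ∧ m ≤ lowF R G + 2 * k := by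
  rw [Aset, Finset.mem_filter]
  simp

lemma stepA {R m k : ℕ} (hk : k < R) (v : Fin n) :
    #(Aset R m k v : Finset (SimpleGraph (Fin n))) * (m - (3 * R + 1))
      ≤ #(Aset R m (k + 1) v : Finset (SimpleGraph (Fin n))) * R := by
  have key := Finset.card_nsmul_le_card_nsmul (rAdd R v)
    (s := Aset R m k v) (t := Aset R m (k + 1) v)
    (m := m - (3 * R + 1)) (n := R) ?_ ?_
  · simpa [smul_eq_mul] using key
  · -- forward bound
    intro G hG
    rw [mem_Aset] at hG
    obtain ⟨hmax, hdgv, hlow⟩ := hG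
    set X : Finset (Fin n) :=
      Finset.univ.filter (fun x => dg G x < R ∧ x ≠ v ∧ ¬ G.Adj v x) with hXdef
    have hXlow : lowF R G ≤ #X + dg G v + 1 := by
      have hsub : (Finset.univ.filter fun w => dg G w < R)
          ⊆ X ∪ insert v (Finset.univ.filter fun w => G.Adj v w) := by
        intro w hw
        simp only [Finset.mem_filter, Finset.mem_univ, true_and] at hw
        rw [Finset.mem_union, Finset.mem_insert]
        by_cases h1 : w = v
        · exact Or.inr (Or.inl h1)
        by_cases h2 : G.Adj v w
        · exact Or.inr (Or.inr (by simp [h2]))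
        · exact Or.inl (by simp [hXdef, hw, h1, h2])
      calc lowF R G ≤ #(X ∪ insert v (Finset.univ.filter fun w => G.Adj v w)) :=
            Finset.card_le_card hsub
        _ ≤ #X + #(insert v (Finset.univ.filter fun w => G.Adj v w)) :=
            Finset.card_union_le _ _
        _ ≤ #X + (#(Finset.univ.filter fun w => G.Adj v w) + 1) := by
            have := Finset.card_insert_le v (Finset.univ.filter fun w => G.Adj v w)
            omega
        _ = #X + dg G v + 1 := by rw [← dg_eq_filter]; omega
    have hXcard : #X ≤ #(Finset.bipartiteAbove (rAdd R v) (Aset R m (k + 1) v) G) := by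
      apply Finset.card_le_card_of_injOn (fun x => G ⊔ edge v x)
      · intro x hx
        simp only [hXdef, Finset.mem_coe, Finset.mem_filter, Finset.mem_univ, true_and] at hx
        obtain ⟨hxR, hxv, hxadj⟩ := hx
        have hvx : v ≠ x := fun h => hxv h.symm
        beta_reduce
        rw [Finset.mem_coe, Finset.mem_bipartiteAbove]
        constructor
        · rw [mem_Aset]
          refine ⟨?_, ?_, ?_⟩
          · intro w
            by_cases hw1 : w = v
            · subst hw1; rw [dg_sup_edge_same G hvx hxadj]; omega
            by_cases hw2 : w = x
            · subst hw2
              rw [edge_comm', dg_sup_edge_same G hvx.symm (fun h => hxadj h.symm)]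
              omega
            · rw [dg_sup_edge_other G hw1 hw2]; exact hmax w
          · rw [dg_sup_edge_same G hvx hxadj]; omega
          · have := low_sup R G v x
            omega
        · exact ⟨x, hxv, hxadj, hxR, rfl⟩
      · intro x1 hx1 x2 hx2 heq
        simp only [hXdef, Finset.coe_filter, Set.mem_setOf_eq] at hx1 hx2
        have heq' : G ⊔ edge v x1 = G ⊔ edge v x2 := heq
        have h1 : (G ⊔ edge v x1).Adj v x1 :=
          Or.inr ((SimpleGraph.edge_adj (s := v) (t := x1) v x1).mpr
            ⟨Or.inl ⟨rfl, rfl⟩, fun h => hx1.2.2.1 h.symm⟩)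
        rw [heq'] at h1
        rw [SimpleGraph.sup_adj, SimpleGraph.edge_adj] at h1
        rcases h1 with h1 | ⟨⟨-, h1⟩ | ⟨h1, -⟩, -⟩
        · exact absurd h1 hx1.2.2.2
        · exact h1
        · exact absurd h1.symm hx2.2.2.1
    simp only [Nat.cast_id]
    omega
  · -- backward
    intro G' hG'
    rw [mem_Aset] at hG'
    obtain ⟨hmax', hdgv', hlow'⟩ := hG'
    have hb : #(Finset.bipartiteBelow (rAdd R v) (Aset R m k v) G')
        ≤ #(Finset.univ.filter fun x => G'.Adj v x) := by
      apply Finset.card_le_card_of_injOn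
        (fun G => if h : rAdd R v G G' then h.choose else v)
      · intro G hG
        rw [Finset.mem_coe, Finset.mem_bipartiteBelow] at hG
        obtain ⟨-, hr⟩ := hG
        simp only [Finset.mem_coe, Finset.mem_filter, Finset.mem_univ, true_and]
        rw [dif_pos hr]
        obtain ⟨x, hspec, hc⟩ :
            ∃ x, (x ≠ v ∧ ¬ G.Adj v x ∧ dg G x < R ∧ G' = G ⊔ edge v x) ∧ hr.choose = x :=
          ⟨hr.choose, hr.choose_spec, rfl⟩
        obtain ⟨hxv, hnadj, hxR, hGeq⟩ := hspec
        rw [hc, hGeq]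
        exact Or.inr ((SimpleGraph.edge_adj (s := v) (t := x) v x).mpr
          ⟨Or.inl ⟨rfl, rfl⟩, fun h => hxv h.symm⟩)
      · intro G1 hG1 G2 hG2 heq
        simp only [Finset.coe_bipartiteBelow, Set.mem_setOf_eq] at hG1 hG2
        obtain ⟨-, hr1⟩ := hG1
        obtain ⟨-, hr2⟩ := hG2
        have heq' : (if h : rAdd R v G1 G' then h.choose else v)
            = (if h : rAdd R v G2 G' then h.choose else v) := heq
        rw [dif_pos hr1, dif_pos hr2] at heq'
        obtain ⟨x1, hspec1, hc1⟩ :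
            ∃ x, (x ≠ v ∧ ¬ G1.Adj v x ∧ dg G1 x < R ∧ G' = G1 ⊔ edge v x) ∧ hr1.choose = x :=
          ⟨hr1.choose, hr1.choose_spec, rfl⟩
        obtain ⟨hxv1, hnadj1, hxR1, hGeq1⟩ := hspec1
        obtain ⟨x2, hspec2, hc2⟩ :
            ∃ x, (x ≠ v ∧ ¬ G2.Adj v x ∧ dg G2 x < R ∧ G' = G2 ⊔ edge v x) ∧ hr2.choose = x :=
          ⟨hr2.choose, hr2.choose_spec, rfl⟩
        obtain ⟨hxv2, hnadj2, hxR2, hGeq2⟩ := hspec2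
        rw [hc1, hc2] at heq'
        subst heq'
        have e1 : G1 = (G' : SimpleGraph (Fin n)).deleteEdges {s(v, x1)} := by
          rw [hGeq1, sup_delete G1 hnadj1]
        have e2 : G2 = (G' : SimpleGraph (Fin n)).deleteEdges {s(v, x1)} := by
          rw [hGeq2, sup_delete G2 hnadj2]
        rw [e1, e2]
    rw [← dg_eq_filter] at hb
    simp only [Nat.cast_id]
    omega

lemma Aset_subset_gset {R m k : ℕ} {v : Fin n} : Aset R m k v ⊆ gsetF n R := by
  intro G hG
  rw [mem_Aset] at hG
  rw [gsetF, Finset.mem_filter]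
  exact ⟨Finset.mem_univ G, hG.1⟩

lemma tripleA {R m k : ℕ} (h3 : k + 3 ≤ R) (v : Fin n) :
    #(Aset R m k v : Finset (SimpleGraph (Fin n))) * (m - (3 * R + 1)) ^ 3
      ≤ #(gsetF n R : Finset (SimpleGraph (Fin n))) * R ^ 3 := by
  set F := m - (3 * R + 1) with hF
  set a := #(Aset R m k v : Finset (SimpleGraph (Fin n)))
  set b := #(Aset R m (k + 1) v : Finset (SimpleGraph (Fin n)))
  set c := #(Aset R m (k + 2) v : Finset (SimpleGraph (Fin n)))
  set d := #(Aset R m (k + 3) v : Finset (SimpleGraph (Fin n)))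
  set N := #(gsetF n R : Finset (SimpleGraph (Fin n)))
  have s1 : a * F ≤ b * R := stepA (by omega) v
  have s2 : b * F ≤ c * R := by
    have := stepA (R := R) (m := m) (k := k + 1) (by omega) v
    simpa using this
  have s3 : c * F ≤ d * R := by
    have := stepA (R := R) (m := m) (k := k + 2) (by omega) v
    simpa using this
  have s4 : d ≤ N := Finset.card_le_card Aset_subset_gset
  calc a * F ^ 3 = (a * F) * F ^ 2 := by ring
    _ ≤ (b * R) * F ^ 2 := Nat.mul_le_mul_right _ s1
    _ = (b * F) * (F * R) := by ring
    _ ≤ (c * R) * (F * R) := Nat.mul_le_mul_right _ s2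
    _ = (c * F) * (R * R) := by ring
    _ ≤ (d * R) * (R * R) := Nat.mul_le_mul_right _ s3
    _ = d * R ^ 3 := by ring
    _ ≤ N * R ^ 3 := Nat.mul_le_mul_right _ s4

noncomputable def Bset (R m j : ℕ) : Finset (SimpleGraph (Fin n)) :=
  Finset.univ.filter fun G => (∀ w, dg G w ≤ R) ∧ lowF R G ≤ m + 2 * j

def rDel (G G' : SimpleGraph (Fin n)) : Prop :=
  ∃ a b, G.Adj a b ∧ G' = G.deleteEdges {s(a, b)}

lemma mem_Bset {R m j : ℕ} {G : SimpleGraph (Fin n)} :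
    G ∈ (Bset R m j : Finset (SimpleGraph (Fin n))) ↔
      (∀ w, dg G w ≤ R) ∧ lowF R G ≤ m + 2 * j := by
  rw [Bset, Finset.mem_filter]
  simp

lemma edgeFinset_card (G : SimpleGraph (Fin n)) [Fintype G.edgeSet] :
    #(G.edgeFinset) = eC G := by
  rw [eC, SimpleGraph.edgeFinset, Set.ncard_eq_toFinset_card']

lemma stepB {R m t j : ℕ} (hj : j < t) :
    #(Bset R m j : Finset (SimpleGraph (Fin n))) * ((R * (n - (m + 2 * t))) / 2)
      ≤ #(Bset R m (j + 1) : Finset (SimpleGraph (Fin n))) * (m + 2 * t) ^ 2 := by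
  have key := Finset.card_nsmul_le_card_nsmul (rDel (n := n))
    (s := Bset R m j) (t := Bset R m (j + 1))
    (m := (R * (n - (m + 2 * t))) / 2) (n := (m + 2 * t) ^ 2) ?_ ?_
  · simpa [smul_eq_mul] using key
  · -- forward
    intro G hG
    rw [mem_Bset] at hG
    obtain ⟨hmax, hlow⟩ := hG
    letI : DecidableRel G.Adj := fun a b => Classical.propDecidable _
    have hcard : #G.edgeFinset ≤ #(Finset.bipartiteAbove rDel (Bset R m (j + 1)) G) := by
      apply Finset.card_le_card_of_injOn (fun e => G.deleteEdges {e})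
      · intro e he
        rw [Finset.mem_coe, SimpleGraph.mem_edgeFinset] at he
        obtain ⟨a, b, rfl⟩ : ∃ a b, e = s(a, b) := by
          induction e using Sym2.ind with
          | _ x y => exact ⟨x, y, rfl⟩
        have hadj : G.Adj a b := he
        beta_reduce
        rw [Finset.mem_coe, Finset.mem_bipartiteAbove]
        constructor
        · rw [mem_Bset]
          refine ⟨fun w => le_trans (dg_deleteEdges_le G _ w) (hmax w), ?_⟩
          have := low_del R G a b
          omega
        · exact ⟨a, b, hadj, rfl⟩
      · intro e1 he1 e2 he2 heq
        have heq' : G.deleteEdges {e1} = G.deleteEdges {e2} := heq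
        rw [Finset.mem_coe, SimpleGraph.mem_edgeFinset] at he1 he2
        have h1 : e1 ∉ (G.deleteEdges {e1}).edgeSet := by
          rw [SimpleGraph.edgeSet_deleteEdges]
          simp
        rw [heq', SimpleGraph.edgeSet_deleteEdges] at h1
        simp only [Set.mem_diff, Set.mem_singleton_iff, not_and, not_not] at h1
        exact h1 he1
    have hlow2 : (R * (n - (m + 2 * t))) / 2 ≤ #G.edgeFinset := by
      have h1 := eC_lower R G
      have h2 : R * (n - (m + 2 * t)) ≤ R * (n - lowF R G) := by
        apply Nat.mul_le_mul_left
        omega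
      have h3 : R * (n - (m + 2 * t)) ≤ 2 * #G.edgeFinset := by
        rw [edgeFinset_card]; omega
      omega
    simp only [Nat.cast_id]
    omega
  · -- backward
    intro G' hG'
    rw [mem_Bset] at hG'
    obtain ⟨hmax', hlow'⟩ := hG'
    rcases isEmpty_or_nonempty (Fin n) with hE | hNE
    · have hempty : #(Finset.bipartiteBelow rDel (Bset R m j) G') = 0 := by
        rw [Finset.card_eq_zero]
        apply Finset.eq_empty_of_forall_notMem
        intro G hG
        rw [Finset.mem_bipartiteBelow] at hG
        obtain ⟨-, a, -⟩ := hG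
        exact hE.elim a
      simp [hempty]
    · have v0 : Fin n := Classical.arbitrary (Fin n)
      have hb : #(Finset.bipartiteBelow rDel (Bset R m j) G')
          ≤ #((Finset.univ.filter fun x => dg G' x < R) ×ˢ
              (Finset.univ.filter fun x => dg G' x < R)) := by
        apply Finset.card_le_card_of_injOn
          (fun G => if h : rDel G G' then ((h.choose, h.choose_spec.choose) : Fin n × Fin n)
            else (v0, v0))
        · intro G hG
          rw [Finset.mem_coe, Finset.mem_bipartiteBelow] at hG
          obtain ⟨hGm, hr⟩ := hG
          rw [mem_Bset] at hGm
          beta_reduce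
          rw [dif_pos hr]
          have hab := hr.choose_spec.choose_spec
          rw [Finset.mem_coe, Finset.mem_product]
          constructor <;> simp only [Finset.mem_filter, Finset.mem_univ, true_and]
          · have h1 := dg_deleteEdge_same G hab.1
            rw [← hab.2] at h1
            have := hGm.1 hr.choose
            omega
          · have hadj' : G.Adj hr.choose_spec.choose hr.choose := hab.1.symm
            have h1 := dg_deleteEdge_same G hadj'
            rw [show ({s(hr.choose_spec.choose, hr.choose)} : Set (Sym2 (Fin n)))
              = {s(hr.choose, hr.choose_spec.choose)} from by rw [Sym2.eq_swap]] at h1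
            rw [← hab.2] at h1
            have := hGm.1 hr.choose_spec.choose
            omega
        · intro G1 hG1 G2 hG2 heq
          simp only [Finset.coe_bipartiteBelow, Set.mem_setOf_eq] at hG1 hG2
          obtain ⟨-, hr1⟩ := hG1
          obtain ⟨-, hr2⟩ := hG2
          have heq' : (if h : rDel G1 G' then ((h.choose, h.choose_spec.choose) : Fin n × Fin n)
              else (v0, v0)) = (if h : rDel G2 G' then
              ((h.choose, h.choose_spec.choose) : Fin n × Fin n) else (v0, v0)) := heq
          rw [dif_pos hr1, dif_pos hr2] at heq'
          have hab1 := hr1.choose_spec.choose_spec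
          have hab2 := hr2.choose_spec.choose_spec
          have e1 := delete_sup G1 hab1.1
          rw [← hab1.2] at e1
          have e2 := delete_sup G2 hab2.1
          rw [← hab2.2] at e2
          rw [← e1, ← e2]
          exact congrArg (fun p : Fin n × Fin n => G' ⊔ edge p.1 p.2) heq'
      have hcard2 : #((Finset.univ.filter fun x => dg G' x < R) ×ˢ
          (Finset.univ.filter fun x => dg G' x < R)) = lowF R G' * lowF R G' := by
        rw [Finset.card_product]
        rfl
      have hle : lowF R G' * lowF R G' ≤ (m + 2 * t) ^ 2 := by
        have h1 : lowF R G' ≤ m + 2 * t := by omega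
        calc lowF R G' * lowF R G' ≤ (m + 2 * t) * (m + 2 * t) :=
              Nat.mul_le_mul h1 h1
          _ = (m + 2 * t) ^ 2 := by ring
      simp only [Nat.cast_id]
      omega



lemma Bset_subset_gset {R m j : ℕ} : (Bset R m j : Finset (SimpleGraph (Fin n))) ⊆ gsetF n R := by
  intro G hG
  rw [mem_Bset] at hG
  rw [gsetF, Finset.mem_filter]
  exact ⟨Finset.mem_univ G, hG.1⟩

lemma iterB {R m t : ℕ} : ∀ i, i ≤ t →
    #(Bset R m 0 : Finset (SimpleGraph (Fin n))) * ((R * (n - (m + 2 * t))) / 2) ^ i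
      ≤ #(Bset R m i : Finset (SimpleGraph (Fin n))) * ((m + 2 * t) ^ 2) ^ i := by
  intro i
  induction i with
  | zero => simp
  | succ i ih =>
    intro hi
    have h1 := ih (by omega)
    have h2 := stepB (n := n) (R := R) (m := m) (t := t) (j := i) (by omega)
    set F := (R * (n - (m + 2 * t))) / 2
    set K := (m + 2 * t) ^ 2
    set B0 := #(Bset R m 0 : Finset (SimpleGraph (Fin n)))
    set Bi := #(Bset R m i : Finset (SimpleGraph (Fin n)))
    set Bi1 := #(Bset R m (i + 1) : Finset (SimpleGraph (Fin n)))
    calc B0 * F ^ (i + 1) = (B0 * F ^ i) * F := by ring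
      _ ≤ (Bi * K ^ i) * F := Nat.mul_le_mul_right _ h1
      _ = (Bi * F) * K ^ i := by ring
      _ ≤ (Bi1 * K) * K ^ i := Nat.mul_le_mul_right _ h2
      _ = Bi1 * K ^ (i + 1) := by ring

lemma B0_bound {R m : ℕ} (hR : 2 ≤ R) (hm : 1 ≤ m) (h64 : 64 * (m * m) ≤ n) :
    #(Bset R m 0 : Finset (SimpleGraph (Fin n))) * 2 ^ m
      ≤ #(gsetF n R : Finset (SimpleGraph (Fin n))) := by
  set F := (R * (n - (m + 2 * m))) / 2 with hFdef
  set K := (m + 2 * m) ^ 2 with hKdef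
  have hKval : K = 9 * (m * m) := by rw [hKdef]; ring
  have h3m : 3 * m ≤ 3 * (m * m) := by nlinarith
  have hKF : 2 * K ≤ F := by
    have h1 : 2 * (n - (m + 2 * m)) ≤ R * (n - (m + 2 * m)) :=
      Nat.mul_le_mul_right _ hR
    have h2 : (2 * (n - (m + 2 * m))) / 2 = n - (m + 2 * m) :=
      Nat.mul_div_cancel_left _ (by norm_num)
    have h3 : n - (m + 2 * m) ≤ F := by
      rw [hFdef]
      calc n - (m + 2 * m) = (2 * (n - (m + 2 * m))) / 2 := h2.symm
        _ ≤ (R * (n - (m + 2 * m))) / 2 := Nat.div_le_div_right h1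
    omega
  have hchain := iterB (n := n) (R := R) (m := m) (t := m) m le_rfl
  have hBt : #(Bset R m m : Finset (SimpleGraph (Fin n)))
      ≤ #(gsetF n R : Finset (SimpleGraph (Fin n))) :=
    Finset.card_le_card Bset_subset_gset
  set B0 := #(Bset R m 0 : Finset (SimpleGraph (Fin n)))
  set N := #(gsetF n R : Finset (SimpleGraph (Fin n)))
  have h4 : B0 * (2 * K) ^ m ≤ B0 * F ^ m :=
    Nat.mul_le_mul_left _ (Nat.pow_le_pow_left hKF m)
  have h5 : B0 * F ^ m ≤ N * K ^ m :=
    le_trans hchain (Nat.mul_le_mul_right _ hBt)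
  have hKpos : 0 < K ^ m := by
    apply Nat.pow_pos
    omega
  apply Nat.le_of_mul_le_mul_right _ hKpos
  calc (B0 * 2 ^ m) * K ^ m = B0 * (2 * K) ^ m := by rw [mul_pow]; ring
    _ ≤ B0 * F ^ m := h4
    _ ≤ N * K ^ m := h5

noncomputable def BadF (n R : ℕ) : Finset (SimpleGraph (Fin n)) :=
  (gsetF n R).filter fun G => ∃ v, dg G v + 2 < R

noncomputable def Uset (n R m : ℕ) : Finset (SimpleGraph (Fin n)) :=
  (Finset.univ : Finset (Fin n)).biUnion fun v =>
    (Finset.range (R - 2)).biUnion fun k => Aset R m k v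

lemma Bad_split {R m : ℕ} :
    #(BadF n R : Finset (SimpleGraph (Fin n)))
      ≤ #(Bset R m 0 : Finset (SimpleGraph (Fin n)))
        + #(Uset n R m : Finset (SimpleGraph (Fin n))) := by
  have hsub : BadF n R ⊆ Bset R m 0 ∪ Uset n R m := by
    intro G hG
    rw [BadF, Finset.mem_filter, gsetF, Finset.mem_filter] at hG
    obtain ⟨⟨-, hmax⟩, v, hv⟩ := hG
    rw [Finset.mem_union]
    rcases le_total (lowF R G) m with hlow | hlow
    · left
      rw [mem_Bset]
      exact ⟨hmax, by omega⟩
    · right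
      rw [Uset, Finset.mem_biUnion]
      refine ⟨v, Finset.mem_univ v, ?_⟩
      rw [Finset.mem_biUnion]
      refine ⟨dg G v, ?_, ?_⟩
      · rw [Finset.mem_range]; omega
      · rw [mem_Aset]
        exact ⟨hmax, rfl, by omega⟩
  calc #(BadF n R) ≤ #(Bset R m 0 ∪ Uset n R m) := Finset.card_le_card hsub
    _ ≤ _ := Finset.card_union_le _ _

lemma U_bound {R m : ℕ} (hR : 2 ≤ R) :
    #(Uset n R m : Finset (SimpleGraph (Fin n))) * (m - (3 * R + 1)) ^ 3
      ≤ n * ((R - 2) * (#(gsetF n R : Finset (SimpleGraph (Fin n))) * R ^ 3)) := by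
  set F3 := (m - (3 * R + 1)) ^ 3
  set N := #(gsetF n R : Finset (SimpleGraph (Fin n)))
  have h1 : #(Uset n R m : Finset (SimpleGraph (Fin n)))
      ≤ ∑ v : Fin n, ∑ k ∈ Finset.range (R - 2), #(Aset R m k v : Finset (SimpleGraph (Fin n))) := by
    rw [Uset]
    refine le_trans (Finset.card_biUnion_le) ?_
    apply Finset.sum_le_sum
    intro v _
    exact Finset.card_biUnion_le
  calc #(Uset n R m) * F3
      ≤ (∑ v : Fin n, ∑ k ∈ Finset.range (R - 2), #(Aset R m k v)) * F3 :=
        Nat.mul_le_mul_right _ h1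
    _ = ∑ v : Fin n, ∑ k ∈ Finset.range (R - 2), #(Aset R m k v) * F3 := by
        simp [Finset.sum_mul]
    _ ≤ ∑ _v : Fin n, ∑ _k ∈ Finset.range (R - 2), N * R ^ 3 := by
        apply Finset.sum_le_sum
        intro v _
        apply Finset.sum_le_sum
        intro k hk
        rw [Finset.mem_range] at hk
        exact tripleA (by omega) v
    _ = n * ((R - 2) * (N * R ^ 3)) := by
        rw [Finset.sum_const, Finset.sum_const, Finset.card_range, Finset.card_univ,
          Fintype.card_fin, smul_eq_mul, smul_eq_mul]

lemma gset_pos (R : ℕ) : 0 < #(gsetF n R : Finset (SimpleGraph (Fin n))) := by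
  rw [Finset.card_pos]
  refine ⟨⊥, ?_⟩
  rw [gsetF, Finset.mem_filter]
  refine ⟨Finset.mem_univ _, fun w => ?_⟩
  have : dg (⊥ : SimpleGraph (Fin n)) w = 0 := by
    rw [dg]
    convert Set.ncard_empty (Fin n)
    ext x; simp [nbr]
  omega



lemma card_filter_iff {α : Type*} [Fintype α] (p q : α → Prop) [DecidablePred p] [DecidablePred q]
    (h : ∀ a, p a ↔ q a) : #(Finset.univ.filter p) = #(Finset.univ.filter q) :=
  congrArg Finset.card (Finset.filter_congr fun a _ => h a)

lemma BadF_le_gset {R : ℕ} :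
    #(BadF n R : Finset (SimpleGraph (Fin n))) ≤ #(gsetF n R : Finset (SimpleGraph (Fin n))) :=
  Finset.card_le_card (by rw [BadF]; exact Finset.filter_subset _ _)

end StmtAux

open StmtAux in
lemma graphProp_eq (n R : ℕ) (hR : 2 ≤ R) :
    graphProp n R (fun G => ∀ v, R - 2 ≤ degS G v)
      = 1 - (#(BadF n R) : ℝ) / (#(gsetF n R) : ℝ) := by
  classical
  rw [graphProp]
  have hden : Nat.card {G : SimpleGraph (Fin n) // ∀ v, degS G v ≤ R}
      = #(gsetF n R : Finset (SimpleGraph (Fin n))) := by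
    rw [Nat.card_eq_fintype_card, Fintype.card_subtype, gsetF]
    exact card_filter_iff _ _ fun G => by
      constructor
      · intro h w; rw [← degS_eq]; exact h w
      · intro h w; rw [degS_eq]; exact h w
  have hnum : Nat.card {G : SimpleGraph (Fin n) //
        (∀ v, degS G v ≤ R) ∧ (∀ v, R - 2 ≤ degS G v)}
      = #(gsetF n R : Finset (SimpleGraph (Fin n)))
        - #(BadF n R : Finset (SimpleGraph (Fin n))) := by
    rw [Nat.card_eq_fintype_card, Fintype.card_subtype]
    have h1 : #((gsetF n R).filter fun G => ∃ v, dg G v + 2 < R)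
        + #((gsetF n R).filter fun G => ¬ ∃ v, dg G v + 2 < R) = #(gsetF n R) :=
      Finset.card_filter_add_card_filter_not _
    have h2 : #((gsetF n R).filter fun G => ¬ ∃ v, dg G v + 2 < R)
        = #(Finset.univ.filter fun G : SimpleGraph (Fin n) =>
            (∀ v, degS G v ≤ R) ∧ (∀ v, R - 2 ≤ degS G v)) := by
      rw [gsetF, Finset.filter_filter]
      apply card_filter_iff
      intro G
      constructor
      · rintro ⟨hmax, hng⟩
        push_neg at hng
        refine ⟨fun v => by rw [degS_eq]; exact hmax v, fun v => ?_⟩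
        have := hng v
        rw [degS_eq]
        omega
      · rintro ⟨hmax, hmin⟩
        refine ⟨fun w => by rw [← degS_eq]; exact hmax w, ?_⟩
        push_neg
        intro v
        have h3 := hmin v
        rw [degS_eq] at h3
        omega
    have hBadF : #(BadF n R : Finset (SimpleGraph (Fin n)))
        = #((gsetF n R).filter fun G => ∃ v, dg G v + 2 < R) := by rw [BadF]
    omega
  rw [hden, hnum]
  have hpos : (0 : ℝ) < (#(gsetF n R : Finset (SimpleGraph (Fin n))) : ℝ) := by
    exact_mod_cast gset_pos R
  have hle := BadF_le_gset (n := n) (R := R)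
  rw [Nat.cast_sub hle]
  field_simp

lemma sqrt_tendsto : Filter.Tendsto (fun n : ℕ => Nat.sqrt n) Filter.atTop Filter.atTop := by
  apply Filter.tendsto_atTop_atTop.mpr
  intro b
  exact ⟨b * b, fun a ha => Nat.le_sqrt.mpr ha⟩

lemma m_tendsto : Filter.Tendsto (fun n : ℕ => Nat.sqrt n / 8) Filter.atTop Filter.atTop := by
  apply Filter.tendsto_atTop_atTop.mpr
  intro b
  refine ⟨(8 * b) * (8 * b), fun a ha => ?_⟩
  have h1 : 8 * b ≤ Nat.sqrt a := Nat.le_sqrt.mpr ha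
  omega

open StmtAux in
lemma ratio_bound (R : ℕ) (hR : 2 ≤ R) :
    ∀ᶠ n : ℕ in Filter.atTop, (#(BadF n R) : ℝ) / (#(gsetF n R) : ℝ)
      ≤ (1/2 : ℝ) ^ (Nat.sqrt n / 8)
        + (((R - 2 : ℕ) : ℝ) * (R : ℝ) ^ 3 * 131072) / (Nat.sqrt n : ℝ) := by
  have hs := sqrt_tendsto.eventually_ge_atTop (64 * (R + 1) + 31)
  filter_upwards [hs] with n hn
  set s := Nat.sqrt n with hsdef
  set m := s / 8 with hmdef
  have hdm := Nat.div_add_mod s 8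
  have hmod8 : s % 8 < 8 := Nat.mod_lt _ (by norm_num)
  have hq16 := Nat.div_add_mod s 16
  have hmod16 : s % 16 < 16 := Nat.mod_lt _ (by norm_num)
  set q := s / 16 with hqdef
  have hss : s * s ≤ n := Nat.sqrt_le n
  have hn4 : n ≤ s * s + s + s := Nat.sqrt_le_add n
  have hm1 : 1 ≤ m := by omega
  have hmR : 3 * R + 2 ≤ m := by omega
  have h64 : 64 * (m * m) ≤ n := by
    have h8m : 8 * m ≤ s := by omega
    calc 64 * (m * m) = (8 * m) * (8 * m) := by ring
      _ ≤ s * s := Nat.mul_le_mul h8m h8m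
      _ ≤ n := hss
  have hB0 := B0_bound (n := n) hR hm1 h64
  have hU := U_bound (n := n) (m := m) hR
  have hsplit := Bad_split (n := n) (R := R) (m := m)
  set F := m - (3 * R + 1) with hFdef
  have hFq : q ≤ F := by omega
  have hq1 : 1 ≤ q := by omega
  have hs31 : s ≤ 31 * q := by omega
  have hssq : s ≤ s * s := by nlinarith
  have hns : n * s ≤ 131072 * F ^ 3 := by
    have h0 : n ≤ 4 * (s * s) := by omega
    have h1 : n * s ≤ (4 * (s * s)) * s := Nat.mul_le_mul_right s h0
    have h2 : s * (s * s) ≤ (31 * q) * ((31 * q) * (31 * q)) :=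
      Nat.mul_le_mul hs31 (Nat.mul_le_mul hs31 hs31)
    have h3 : q ^ 3 ≤ F ^ 3 := Nat.pow_le_pow_left hFq 3
    calc n * s ≤ (4 * (s * s)) * s := h1
      _ = 4 * (s * (s * s)) := by ring
      _ ≤ 4 * ((31 * q) * ((31 * q) * (31 * q))) := Nat.mul_le_mul_left 4 h2
      _ = 119164 * q ^ 3 := by ring
      _ ≤ 119164 * F ^ 3 := Nat.mul_le_mul_left _ h3
      _ ≤ 131072 * F ^ 3 := Nat.mul_le_mul_right _ (by norm_num)
  -- cancel F^3 to get the U * s bound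
  have hUs : #(Uset n R m : Finset (SimpleGraph (Fin n))) * s
      ≤ 131072 * ((R - 2) * (#(gsetF n R : Finset (SimpleGraph (Fin n))) * R ^ 3)) := by
    set U := #(Uset n R m : Finset (SimpleGraph (Fin n)))
    set N := #(gsetF n R : Finset (SimpleGraph (Fin n)))
    have hF3pos : 0 < F ^ 3 := Nat.pow_pos (by omega)
    apply Nat.le_of_mul_le_mul_right _ hF3pos
    calc (U * s) * F ^ 3 = (U * F ^ 3) * s := by ring
      _ ≤ (n * ((R - 2) * (N * R ^ 3))) * s := Nat.mul_le_mul_right _ hU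
      _ = (n * s) * ((R - 2) * (N * R ^ 3)) := by ring
      _ ≤ (131072 * F ^ 3) * ((R - 2) * (N * R ^ 3)) := Nat.mul_le_mul_right _ hns
      _ = (131072 * ((R - 2) * (N * R ^ 3))) * F ^ 3 := by ring
  -- real arithmetic
  have hNpos : (0 : ℝ) < (#(gsetF n R : Finset (SimpleGraph (Fin n))) : ℝ) := by
    exact_mod_cast gset_pos R
  have hspos : (0 : ℝ) < (s : ℝ) := by
    have h0 : 0 < s := by omega
    exact_mod_cast h0
  have hB0r : (#(Bset R m 0 : Finset (SimpleGraph (Fin n))) : ℝ)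
      / (#(gsetF n R : Finset (SimpleGraph (Fin n))) : ℝ) ≤ (1/2 : ℝ) ^ m := by
    rw [div_le_iff₀ hNpos]
    have hcast : (#(Bset R m 0 : Finset (SimpleGraph (Fin n))) : ℝ) * 2 ^ m
        ≤ (#(gsetF n R : Finset (SimpleGraph (Fin n))) : ℝ) := by exact_mod_cast hB0
    have h2m : (0 : ℝ) < 2 ^ m := by positivity
    rw [show ((1 : ℝ)/2) ^ m = ((2 : ℝ) ^ m)⁻¹ by rw [one_div, inv_pow],
      inv_mul_eq_div, le_div_iff₀ h2m]
    exact hcast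
  have hUr : (#(Uset n R m : Finset (SimpleGraph (Fin n))) : ℝ)
      / (#(gsetF n R : Finset (SimpleGraph (Fin n))) : ℝ)
      ≤ (((R - 2 : ℕ) : ℝ) * (R : ℝ) ^ 3 * 131072) / (s : ℝ) := by
    rw [div_le_div_iff₀ hNpos hspos]
    have hcast : (#(Uset n R m : Finset (SimpleGraph (Fin n))) : ℝ) * s
        ≤ 131072 * (((R - 2 : ℕ) : ℝ)
            * ((#(gsetF n R : Finset (SimpleGraph (Fin n))) : ℝ) * (R : ℝ) ^ 3)) := by
      exact_mod_cast hUs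
    calc (#(Uset n R m : Finset (SimpleGraph (Fin n))) : ℝ) * s
        ≤ 131072 * (((R - 2 : ℕ) : ℝ)
            * ((#(gsetF n R : Finset (SimpleGraph (Fin n))) : ℝ) * (R : ℝ) ^ 3)) := hcast
      _ = ((R - 2 : ℕ) : ℝ) * (R : ℝ) ^ 3 * 131072
            * (#(gsetF n R : Finset (SimpleGraph (Fin n))) : ℝ) := by ring
  have hsplitr : (#(BadF n R : Finset (SimpleGraph (Fin n))) : ℝ)
      / (#(gsetF n R : Finset (SimpleGraph (Fin n))) : ℝ)
      ≤ (#(Bset R m 0 : Finset (SimpleGraph (Fin n))) : ℝ)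
          / (#(gsetF n R : Finset (SimpleGraph (Fin n))) : ℝ)
        + (#(Uset n R m : Finset (SimpleGraph (Fin n))) : ℝ)
          / (#(gsetF n R : Finset (SimpleGraph (Fin n))) : ℝ) := by
    rw [← add_div]
    gcongr
    exact_mod_cast hsplit
  calc (#(BadF n R : Finset (SimpleGraph (Fin n))) : ℝ)
      / (#(gsetF n R : Finset (SimpleGraph (Fin n))) : ℝ)
      ≤ _ + _ := hsplitr
    _ ≤ (1/2 : ℝ) ^ m + (((R - 2 : ℕ) : ℝ) * (R : ℝ) ^ 3 * 131072) / (s : ℝ) :=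
        add_le_add hB0r hUr

open StmtAux

theorem stmt0 (R : ℕ) (hR : 2 ≤ R) :
    Tendsto (fun n : ℕ => graphProp n R (fun G => ∀ v, R - 2 ≤ degS G v))
      atTop (𝓝 1) := by
  have hfun : (fun n : ℕ => graphProp n R (fun G => ∀ v, R - 2 ≤ degS G v))
      = fun n : ℕ => 1 - (#(BadF n R) : ℝ) / (#(gsetF n R) : ℝ) :=
    funext fun n => graphProp_eq n R hR
  rw [hfun]
  have hzero : Tendsto (fun n : ℕ => (#(BadF n R) : ℝ) / (#(gsetF n R) : ℝ))
      atTop (𝓝 0) := by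
    have hg : Tendsto (fun n : ℕ => (1/2 : ℝ) ^ (Nat.sqrt n / 8)
        + (((R - 2 : ℕ) : ℝ) * (R : ℝ) ^ 3 * 131072) / (Nat.sqrt n : ℝ))
        atTop (𝓝 0) := by
      have h1 : Tendsto (fun n : ℕ => (1/2 : ℝ) ^ (Nat.sqrt n / 8)) atTop (𝓝 0) :=
        (tendsto_pow_atTop_nhds_zero_of_lt_one (by norm_num) (by norm_num)).comp m_tendsto
      have h2 : Tendsto (fun n : ℕ => (((R - 2 : ℕ) : ℝ) * (R : ℝ) ^ 3 * 131072)
          / (Nat.sqrt n : ℝ)) atTop (𝓝 0) :=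
        Filter.Tendsto.div_atTop tendsto_const_nhds
          (tendsto_natCast_atTop_atTop.comp sqrt_tendsto)
      simpa using h1.add h2
    apply tendsto_of_tendsto_of_tendsto_of_le_of_le' tendsto_const_nhds hg
    · exact Filter.Eventually.of_forall fun n => div_nonneg (by positivity) (by positivity)
    · exact ratio_bound R hR
  simpa using tendsto_const_nhds.sub hzero
end

section
/- Let R ≥ 2 be an integer. For every real c > R, the proportion of multigraphs M in MG_{n,R} which have more than √(cn) vertices of degree exactly R−1 tends to 0 as n → ∞. -/
open Filter Topology

/-- A multigraph on `Fin n` is a function assigning a multiplicity to each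
unordered pair of vertices (including loops); the degree of `v` counts each
loop at `v` twice. -/
def mdeg {n : ℕ} (f : Sym2 (Fin n) → ℕ) (v : Fin n) : ℕ :=
  2 * f s(v, v) + ∑ w ∈ Finset.univ.erase v, f s(v, w)

lemma apply_le {n R : ℕ} {f : Sym2 (Fin n) → ℕ} (hf : ∀ v, mdeg f v ≤ R)
    (e : Sym2 (Fin n)) : f e ≤ R := by
  induction e using Sym2.ind with
  | _ x y =>
    by_cases hxy : x = y
    · subst hxy
      have := hf x
      unfold mdeg at this
      omega
    · have h1 : f s(x, y) ≤ ∑ w ∈ Finset.univ.erase x, f s(x, w) := by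
        apply Finset.single_le_sum (f := fun w => f s(x, w)) (fun w _ => Nat.zero_le _)
        exact Finset.mem_erase.2 ⟨Ne.symm hxy, Finset.mem_univ _⟩
      have := hf x
      unfold mdeg at this
      omega

lemma finite_valid (n R : ℕ) : Finite {f : Sym2 (Fin n) → ℕ // ∀ v, mdeg f v ≤ R} := by
  apply Finite.of_injective (fun f => (fun e => (⟨f.1 e, Nat.lt_succ_of_le (apply_le f.2 e)⟩ : Fin (R+1))))
  intro f g h
  ext e
  exact congrArg Fin.val (congrFun h e)

lemma mdeg_add {n : ℕ} (f g : Sym2 (Fin n) → ℕ) (v : Fin n) :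
    mdeg (fun e => f e + g e) v = mdeg f v + mdeg g v := by
  unfold mdeg
  rw [Finset.sum_add_distrib]
  ring

lemma mdeg_single {n : ℕ} (x y : Fin n) (hxy : x ≠ y) (u : Fin n) :
    mdeg (fun e => if e = s(x, y) then 1 else 0) u = if u = x ∨ u = y then 1 else 0 := by
  unfold mdeg
  simp only
  have hloop : (if s(u, u) = s(x, y) then (1:ℕ) else 0) = 0 := by
    rw [if_neg]
    rw [Sym2.eq_iff]
    rintro (⟨rfl, rfl⟩ | ⟨rfl, rfl⟩) <;> exact hxy rfl
  rw [hloop]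
  by_cases hux : u = x
  · have hne : ∀ w ∈ Finset.univ.erase u, (if s(u, w) = s(x, y) then (1:ℕ) else 0) = if w = y then 1 else 0 := by
      intro w hw
      apply if_congr _ rfl rfl
      rw [hux, Sym2.eq_iff]
      constructor
      · rintro (⟨-, rfl⟩ | ⟨rfl, rfl⟩)
        · rfl
        · exact absurd rfl hxy
      · rintro rfl; exact Or.inl ⟨rfl, rfl⟩
    rw [Finset.sum_congr rfl hne, Finset.sum_ite_eq' (Finset.univ.erase u) y (fun _ => 1),
      if_pos (Finset.mem_erase.2 ⟨(fun h => hxy (hux.symm.trans h.symm) : y ≠ u), Finset.mem_univ _⟩),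
      if_pos (Or.inl hux)]
  · by_cases huy : u = y
    · have hne : ∀ w ∈ Finset.univ.erase u, (if s(u, w) = s(x, y) then (1:ℕ) else 0) = if w = x then 1 else 0 := by
        intro w hw
        apply if_congr _ rfl rfl
        rw [huy, Sym2.eq_iff]
        constructor
        · rintro (⟨rfl, rfl⟩ | ⟨-, rfl⟩)
          · exact absurd rfl hxy
          · rfl
        · rintro rfl; exact Or.inr ⟨rfl, rfl⟩
      rw [Finset.sum_congr rfl hne, Finset.sum_ite_eq' (Finset.univ.erase u) x (fun _ => 1),
        if_pos (Finset.mem_erase.2 ⟨(fun h => hxy (h.trans huy) : x ≠ u), Finset.mem_univ _⟩),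
        if_pos (Or.inr huy)]
    · rw [if_neg (by tauto)]
      have hne : ∀ w ∈ Finset.univ.erase u, (if s(u, w) = s(x, y) then (1:ℕ) else 0) = 0 := by
        intro w hw
        rw [if_neg]
        rw [Sym2.eq_iff]
        rintro (⟨rfl, rfl⟩ | ⟨rfl, rfl⟩)
        · exact hux rfl
        · exact huy rfl
      rw [Finset.sum_congr rfl hne, Finset.sum_const_zero]
      rfl

def e0 {t : ℕ} (i : Fin t) : Fin (2*t) := ⟨2*i.1, by have := i.isLt; omega⟩
def e1 {t : ℕ} (i : Fin t) : Fin (2*t) := ⟨2*i.1+1, by have := i.isLt; omega⟩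

lemma e0_ne_e1 {t : ℕ} (i j : Fin t) : e0 i ≠ e1 j := by
  intro h
  have := congrArg Fin.val h
  simp only [e0, e1] at this
  omega

lemma e0_inj {t : ℕ} {i j : Fin t} (h : e0 i = e0 j) : i = j := by
  have := congrArg Fin.val h
  simp only [e0] at this
  exact Fin.ext (by omega)

lemma e1_inj {t : ℕ} {i j : Fin t} (h : e1 i = e1 j) : i = j := by
  have := congrArg Fin.val h
  simp only [e1] at this
  exact Fin.ext (by omega)

def addFn {n t : ℕ} (v : Fin (2*t) ↪ Fin n) : Sym2 (Fin n) → ℕ :=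
  fun e => ∑ i : Fin t, if e = s(v (e0 i), v (e1 i)) then 1 else 0

lemma mdeg_sum {n : ℕ} {ι : Type*} (s : Finset ι) (g : ι → Sym2 (Fin n) → ℕ) (u : Fin n) :
    mdeg (fun e => ∑ i ∈ s, g i e) u = ∑ i ∈ s, mdeg (g i) u := by
  unfold mdeg
  rw [Finset.sum_add_distrib, ← Finset.mul_sum, Finset.sum_comm]

lemma mdeg_addFn {n t : ℕ} (v : Fin (2*t) ↪ Fin n) (u : Fin n) :
    mdeg (addFn v) u = ∑ i : Fin t, if u = v (e0 i) ∨ u = v (e1 i) then 1 else 0 := by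
  unfold addFn
  rw [mdeg_sum]
  refine Finset.sum_congr rfl fun i _ => ?_
  exact mdeg_single _ _ (fun h => e0_ne_e1 i i (v.injective h)) u

lemma mdeg_addFn_le_one {n t : ℕ} (v : Fin (2*t) ↪ Fin n) (u : Fin n) :
    mdeg (addFn v) u ≤ 1 := by
  rw [mdeg_addFn, ← Finset.card_filter]
  apply Finset.card_le_one.2
  intro i hi j hj
  rw [Finset.mem_filter] at hi hj
  rcases hi.2 with hi2 | hi2 <;> rcases hj.2 with hj2 | hj2 <;>
    have h := v.injective (hi2.symm.trans hj2)
  · exact e0_inj h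
  · exact absurd h (e0_ne_e1 i j)
  · exact absurd h.symm (e0_ne_e1 j i)
  · exact e1_inj h

lemma mdeg_addFn_eq_zero {n t : ℕ} (v : Fin (2*t) ↪ Fin n) (u : Fin n)
    (hu : ∀ j, u ≠ v j) : mdeg (addFn v) u = 0 := by
  rw [mdeg_addFn]
  refine Finset.sum_eq_zero fun i _ => ?_
  rw [if_neg]
  rintro (h | h)
  · exact hu _ h
  · exact hu _ h

lemma addFn_edge {n t : ℕ} (v : Fin (2*t) ↪ Fin n) (i : Fin t) :
    1 ≤ addFn v s(v (e0 i), v (e1 i)) := by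
  unfold addFn
  calc 1 = if s(v (e0 i), v (e1 i)) = s(v (e0 i), v (e1 i)) then 1 else 0 := by rw [if_pos rfl]
  _ ≤ _ := Finset.single_le_sum (f := fun j => if s(v (e0 i), v (e1 i)) = s(v (e0 j), v (e1 j)) then 1 else 0) (fun _ _ => Nat.zero_le _) (Finset.mem_univ i)

lemma main_count (n R t k : ℕ) (hR : 1 ≤ R) :
    Nat.card {f : Sym2 (Fin n) → ℕ // (∀ v, mdeg f v ≤ R) ∧
        k ≤ Set.ncard {v | mdeg f v = R - 1}} * Nat.descFactorial k (2*t)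
    ≤ Nat.card {f : Sym2 (Fin n) → ℕ // ∀ v, mdeg f v ≤ R} * (n*R)^t := by
  classical
  haveI : Finite {f : Sym2 (Fin n) → ℕ // ∀ v, mdeg f v ≤ R} := finite_valid n R
  haveI : Fintype {f : Sym2 (Fin n) → ℕ // ∀ v, mdeg f v ≤ R} :=
    Fintype.ofFinite _
  set V := {f : Sym2 (Fin n) → ℕ // ∀ v, mdeg f v ≤ R} with hV
  -- rewrite numerator
  have hnum : Nat.card {f : Sym2 (Fin n) → ℕ // (∀ v, mdeg f v ≤ R) ∧
      k ≤ Set.ncard {v | mdeg f v = R - 1}}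
      = (Finset.univ.filter (fun g : V => k ≤ Set.ncard {v | mdeg g.1 v = R - 1})).card := by
    rw [← Nat.card_congr (Equiv.subtypeSubtypeEquivSubtypeInter
      (fun f : Sym2 (Fin n) → ℕ => ∀ v, mdeg f v ≤ R)
      (fun f => k ≤ Set.ncard {v | mdeg f v = R - 1}))]
    rw [Nat.card_eq_fintype_card, Fintype.card_subtype]
  have hden : Nat.card {f : Sym2 (Fin n) → ℕ // ∀ v, mdeg f v ≤ R} = Fintype.card V := by
    rw [Nat.card_eq_fintype_card]
  rw [hnum, hden]
  -- conditions
  set condA : V → (Fin (2*t) ↪ Fin n) → Prop :=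
    fun g v => ∀ j, mdeg g.1 (v j) = R - 1 with hcondA
  set condB : V → (Fin (2*t) ↪ Fin n) → Prop :=
    fun g v => ∀ i : Fin t, 1 ≤ g.1 s(v (e0 i), v (e1 i)) with hcondB
  set FA : Finset (V × (Fin (2*t) ↪ Fin n)) :=
    Finset.univ.filter (fun p => condA p.1 p.2) with hFA
  set FB : Finset (V × (Fin (2*t) ↪ Fin n)) :=
    Finset.univ.filter (fun p => condB p.1 p.2) with hFB
  have hsplitA : FA.card = ∑ g : V, (Finset.univ.filter (condA g)).card := by
    rw [hFA, Finset.card_filter, ← Finset.univ_product_univ, Finset.sum_product]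
    exact Finset.sum_congr rfl fun g _ => (Finset.card_filter _ _).symm
  have hsplitB : FB.card = ∑ g : V, (Finset.univ.filter (condB g)).card := by
    rw [hFB, Finset.card_filter, ← Finset.univ_product_univ, Finset.sum_product]
    exact Finset.sum_congr rfl fun g _ => (Finset.card_filter _ _).symm
  -- Step A
  have stepA : (Finset.univ.filter
      (fun g : V => k ≤ Set.ncard {v | mdeg g.1 v = R - 1})).card * Nat.descFactorial k (2*t)
      ≤ FA.card := by
    rw [hsplitA, Finset.card_eq_sum_ones (Finset.univ.filter _), Finset.sum_mul, one_mul]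
    calc ∑ g ∈ Finset.univ.filter (fun g : V => k ≤ Set.ncard {v | mdeg g.1 v = R - 1}),
          Nat.descFactorial k (2*t)
        ≤ ∑ g ∈ Finset.univ.filter (fun g : V => k ≤ Set.ncard {v | mdeg g.1 v = R - 1}),
          (Finset.univ.filter (condA g)).card := by
          apply Finset.sum_le_sum
          intro g hg
          rw [Finset.mem_filter] at hg
          -- get an embedding into the deficient set
          have hcard : k ≤ Fintype.card {v : Fin n // mdeg g.1 v = R - 1} := by
            have h2 := hg.2
            rw [Set.ncard_eq_toFinset_card', Set.toFinset_setOf] at h2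
            rw [Fintype.card_subtype]
            exact h2
          obtain ⟨e⟩ : Nonempty (Fin k ↪ {v : Fin n // mdeg g.1 v = R - 1}) := by
            apply Function.Embedding.nonempty_of_card_le
            simpa using hcard
          set e' : Fin k ↪ Fin n := e.trans (Function.Embedding.subtype _) with he'
          have : Nat.descFactorial k (2*t)
              = (Finset.univ : Finset (Fin (2*t) ↪ Fin k)).card := by
            rw [Finset.card_univ, Fintype.card_embedding_eq]
            simp
          rw [this]
          apply Finset.card_le_card_of_injOn (fun σ => σ.trans e')
          · intro σ _
            simp only [Finset.mem_coe]
            rw [Finset.mem_filter]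
            refine ⟨Finset.mem_univ _, fun j => ?_⟩
            exact (e (σ j)).2
          · intro σ₁ _ σ₂ _ h
            refine Function.Embedding.ext fun j => ?_
            have := DFunLike.congr_fun h j
            exact e'.injective this
      _ ≤ ∑ g : V, (Finset.univ.filter (condA g)).card :=
          Finset.sum_le_sum_of_subset (Finset.filter_subset _ _)
  -- Step B
  have stepB : FA.card ≤ FB.card := by
    have hvalid : ∀ p : V × (Fin (2*t) ↪ Fin n), condA p.1 p.2 →
        ∀ u, mdeg (fun e => p.1.1 e + addFn p.2 e) u ≤ R := by
      intro p hp u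
      rw [mdeg_add]
      by_cases hu : ∃ j, u = p.2 j
      · obtain ⟨j, rfl⟩ := hu
        have h1 := hp j
        have h2 := mdeg_addFn_le_one p.2 (p.2 j)
        omega
      · rw [mdeg_addFn_eq_zero _ _ (fun j hj => hu ⟨j, hj⟩)]
        have := p.1.2 u
        omega
    apply Finset.card_le_card_of_injOn
      (fun p => if h : condA p.1 p.2 then
        ((⟨fun e => p.1.1 e + addFn p.2 e, hvalid p h⟩ : V), p.2) else p)
    · intro p hp
      rw [Finset.mem_coe, hFA, Finset.mem_filter] at hp
      simp only [Finset.mem_coe]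
      rw [dif_pos hp.2, Finset.mem_filter]
      refine ⟨Finset.mem_univ _, fun i => ?_⟩
      exact le_trans (addFn_edge p.2 i) (Nat.le_add_left _ _)
    · intro p hp q hq h
      rw [Finset.mem_coe, hFA, Finset.mem_filter] at hp hq
      simp only at h
      rw [dif_pos hp.2, dif_pos hq.2] at h
      obtain ⟨h1, h2⟩ := Prod.mk.inj h
      have h1' : ∀ e, p.1.1 e + addFn p.2 e = q.1.1 e + addFn q.2 e :=
        fun e => congrFun (congrArg Subtype.val h1) e
      have : p.1 = q.1 := by
        apply Subtype.ext
        funext e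
        have := h1' e
        rw [h2] at this
        omega
      exact Prod.ext this h2
  -- Step C
  have stepC : FB.card ≤ Fintype.card V * (n*R)^t := by
    rw [hsplitB]
    have hper : ∀ g : V, (Finset.univ.filter (condB g)).card ≤ (n*R)^t := by
      intro g
      set Eg : Finset (Fin n × Fin n) :=
        Finset.univ.filter (fun q => q.1 ≠ q.2 ∧ 1 ≤ g.1 s(q.1, q.2)) with hEg
      have hEcard : Eg.card ≤ n*R := by
        calc Eg.card = ∑ q ∈ Eg, 1 := Finset.card_eq_sum_ones _
          _ ≤ ∑ q ∈ Eg, g.1 s(q.1, q.2) := by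
              apply Finset.sum_le_sum
              intro q hq
              rw [hEg, Finset.mem_filter] at hq
              exact hq.2.2
          _ ≤ ∑ q ∈ Finset.univ.filter (fun q : Fin n × Fin n => q.1 ≠ q.2), g.1 s(q.1, q.2) := by
              apply Finset.sum_le_sum_of_subset
              intro q hq
              rw [hEg, Finset.mem_filter] at hq
              rw [Finset.mem_filter]
              exact ⟨hq.1, hq.2.1⟩
          _ = ∑ x : Fin n, ∑ y ∈ Finset.univ.erase x, g.1 s(x, y) := by
              rw [Finset.sum_filter, ← Finset.univ_product_univ, Finset.sum_product]
              refine Finset.sum_congr rfl fun x _ => ?_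
              rw [← Finset.sum_filter, Finset.filter_ne]
          _ ≤ ∑ _x : Fin n, R := by
              apply Finset.sum_le_sum
              intro x _
              exact le_trans (Nat.le_add_left _ _) (g.2 x)
          _ = n*R := by simp [mul_comm]
      calc (Finset.univ.filter (condB g)).card
          ≤ (Fintype.piFinset (fun _ : Fin t => Eg)).card := by
            apply Finset.card_le_card_of_injOn (fun v => fun i : Fin t => (v (e0 i), v (e1 i)))
            · intro v hv
              rw [Finset.mem_coe, Finset.mem_filter] at hv
              simp only [Finset.mem_coe]
              rw [Fintype.mem_piFinset]
              intro i
              rw [hEg, Finset.mem_filter]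
              exact ⟨Finset.mem_univ _,
                fun hh => e0_ne_e1 i i (v.injective hh), hv.2 i⟩
            · intro v₁ _ v₂ _ h
              have hcomp : ∀ i : Fin t, v₁ (e0 i) = v₂ (e0 i) ∧ v₁ (e1 i) = v₂ (e1 i) := by
                intro i
                have := congrFun h i
                exact ⟨congrArg Prod.fst this, congrArg Prod.snd this⟩
              refine Function.Embedding.ext fun j => ?_
              have hj2 : j.1 / 2 < t := by have := j.isLt; omega
              rcases Nat.even_or_odd j.1 with ⟨m, hm⟩ | ⟨m, hm⟩
              · have hje : j = e0 ⟨j.1/2, hj2⟩ := Fin.ext (by simp only [e0]; omega)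
                rw [hje]
                exact (hcomp _).1
              · have hje : j = e1 ⟨j.1/2, hj2⟩ := Fin.ext (by simp only [e1]; omega)
                rw [hje]
                exact (hcomp _).2
        _ = Eg.card ^ t := by
            rw [Fintype.card_piFinset_const]
        _ ≤ (n*R)^t := Nat.pow_le_pow_left hEcard t
    calc ∑ g : V, (Finset.univ.filter (condB g)).card
        ≤ ∑ _g : V, (n*R)^t := Finset.sum_le_sum fun g _ => hper g
      _ = Fintype.card V * (n*R)^t := by
          rw [Finset.sum_const, Finset.card_univ, smul_eq_mul]
  exact le_trans stepA (le_trans stepB stepC)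
/-- The proportion of multigraphs on `{1,…,n}` with maximum degree at most `R`
that satisfy the property `P`. -/
noncomputable def mgProp (n R : ℕ) (P : (Sym2 (Fin n) → ℕ) → Prop) : ℝ :=
  (Nat.card {f : Sym2 (Fin n) → ℕ // (∀ v, mdeg f v ≤ R) ∧ P f} : ℝ) /
  (Nat.card {f : Sym2 (Fin n) → ℕ // ∀ v, mdeg f v ≤ R} : ℝ)

theorem stmt6 (R : ℕ) (hR : 2 ≤ R) (c : ℝ) (hcR : (R : ℝ) < c) :
    Tendsto (fun n : ℕ => mgProp n R (fun f =>
        Real.sqrt (c * n) < (Set.ncard {v | mdeg f v = R - 1} : ℝ)))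
      atTop (𝓝 0) := by
  have hR0 : (0:ℝ) ≤ R := Nat.cast_nonneg R
  have hc0 : (0:ℝ) < c := lt_of_le_of_lt hR0 hcR
  set q : ℝ := ((R:ℝ)/c + 1)/2 with hqdef
  have hrc1 : (R:ℝ)/c < 1 := (div_lt_one hc0).2 hcR
  have hrc0 : 0 ≤ (R:ℝ)/c := div_nonneg hR0 hc0.le
  have hRq : (R:ℝ)/c < q := by rw [hqdef]; linarith
  have hq1 : q < 1 := by rw [hqdef]; linarith
  have hq0 : 0 < q := by rw [hqdef]; linarith
  have hqcR : 0 < q*c - R := by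
    have h := (div_lt_iff₀ hc0).1 hRq
    linarith
  rw [NormedAddCommGroup.tendsto_nhds_zero]
  intro ε hε
  obtain ⟨t, ht⟩ := exists_pow_lt_of_lt_one hε hq1
  set M : ℝ := max ((4*q*t*Real.sqrt c/(q*c - R))^2) ((2*t+1)^2/c) with hM
  filter_upwards [tendsto_natCast_atTop_atTop.eventually_ge_atTop M] with n hn
  set s : ℝ := Real.sqrt (c*n) with hs
  have hn0 : (0:ℝ) ≤ n := Nat.cast_nonneg n
  have hs_def : s = Real.sqrt c * Real.sqrt n := by rw [hs, Real.sqrt_mul hc0.le]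
  have hs1 : 2*(t:ℝ)+1 ≤ s := by
    rw [hs, show (2*(t:ℝ)+1) = Real.sqrt ((2*(t:ℝ)+1)^2) from (Real.sqrt_sq (by positivity)).symm]
    apply Real.sqrt_le_sqrt
    have h1 : (2*(t:ℝ)+1)^2/c ≤ n := le_trans (le_max_right _ _) hn
    rw [div_le_iff₀ hc0] at h1
    linarith
  have hsqn : 4*q*(t:ℝ)*Real.sqrt c/(q*c - R) ≤ Real.sqrt n := by
    have h1 : (4*q*(t:ℝ)*Real.sqrt c/(q*c-R))^2 ≤ n := le_trans (le_max_left _ _) hn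
    calc 4*q*(t:ℝ)*Real.sqrt c/(q*c - ↑R) ≤ |4*q*(t:ℝ)*Real.sqrt c/(q*c-R)| := le_abs_self _
      _ = Real.sqrt ((4*q*(t:ℝ)*Real.sqrt c/(q*c-R))^2) := (Real.sqrt_sq_eq_abs _).symm
      _ ≤ Real.sqrt n := Real.sqrt_le_sqrt h1
  have hsn0 : (0:ℝ) ≤ Real.sqrt n := Real.sqrt_nonneg n
  have hsc0 : (0:ℝ) ≤ Real.sqrt c := Real.sqrt_nonneg c
  have hsqmul : Real.sqrt n * Real.sqrt n = n := Real.mul_self_sqrt hn0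
  have h2 : 4*q*(t:ℝ)*Real.sqrt c * Real.sqrt n ≤ (q*c - R) * ((n:ℝ)) := by
    have h3 : 4*q*(t:ℝ)*Real.sqrt c ≤ (q*c - R) * Real.sqrt n := by
      rw [div_le_iff₀ hqcR] at hsqn
      linarith [hsqn]
    calc 4*q*(t:ℝ)*Real.sqrt c * Real.sqrt n ≤ ((q*c - R) * Real.sqrt n) * Real.sqrt n :=
          mul_le_mul_of_nonneg_right h3 hsn0
      _ = (q*c - R) * (n:ℝ) := by rw [mul_assoc, hsqmul]
  have hE2 : (n:ℝ)*R ≤ q*(s - 2*t)^2 := by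
    have hss : s * s = c * n := Real.mul_self_sqrt (by positivity)
    have h2' : 4*q*(t:ℝ)*s ≤ (q*c - R)*n := by
      rw [hs_def]
      nlinarith [h2]
    have hss' : q*(s*s) = q*(c*n) := by rw [hss]
    nlinarith [h2', hss', (by positivity : (0:ℝ) ≤ q*(t:ℝ)^2)]
  -- counting
  set k : ℕ := ⌊s⌋₊ + 1 with hk
  have hks : s < (k:ℝ) := by
    rw [hk]
    push_cast
    exact Nat.lt_floor_add_one s
  have hkt : 2*t + 1 ≤ k := by
    have hlt : ((2*t+1 : ℕ) : ℝ) < (k:ℝ) := by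
      push_cast
      linarith [Nat.lt_floor_add_one s, hs1]
    have hlt2 : 2*t+1 < k := by exact_mod_cast hlt
    omega
  haveI hfin : Finite {f : Sym2 (Fin n) → ℕ // ∀ v, mdeg f v ≤ R} := finite_valid n R
  haveI hne : Nonempty {f : Sym2 (Fin n) → ℕ // ∀ v, mdeg f v ≤ R} :=
    ⟨⟨fun _ => 0, fun v => by simp [mdeg]⟩⟩
  have hD : 0 < Nat.card {f : Sym2 (Fin n) → ℕ // ∀ v, mdeg f v ≤ R} := Nat.card_pos
  haveI hfin2 : Finite {f : Sym2 (Fin n) → ℕ // (∀ v, mdeg f v ≤ R) ∧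
      k ≤ Set.ncard {v | mdeg f v = R - 1}} :=
    Finite.of_injective (fun f => (⟨f.1, f.2.1⟩ : {f : Sym2 (Fin n) → ℕ // ∀ v, mdeg f v ≤ R}))
      (by intro f g h; have hv := congrArg Subtype.val h; exact Subtype.ext hv)
  have hmono : Nat.card {f : Sym2 (Fin n) → ℕ // (∀ v, mdeg f v ≤ R) ∧
        Real.sqrt (c*n) < (Set.ncard {v | mdeg f v = R - 1} : ℝ)}
      ≤ Nat.card {f : Sym2 (Fin n) → ℕ // (∀ v, mdeg f v ≤ R) ∧
        k ≤ Set.ncard {v | mdeg f v = R - 1}} := by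
    apply Nat.card_le_card_of_injective
      (fun f => ⟨f.1, f.2.1, by
        have hlt := f.2.2
        have hfl : ⌊Real.sqrt (c*(n:ℝ))⌋₊ < Set.ncard {v | mdeg f.1 v = R - 1} :=
          (Nat.floor_lt (Real.sqrt_nonneg _)).2 hlt
        show k ≤ _
        rw [hk]
        exact Nat.succ_le_of_lt hfl⟩)
    intro f g h
    have hv := congrArg Subtype.val h
    exact Subtype.ext hv
  have hcount := main_count n R t k (by omega)
  have hfinal_nat : Nat.card {f : Sym2 (Fin n) → ℕ // (∀ v, mdeg f v ≤ R) ∧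
        Real.sqrt (c*n) < (Set.ncard {v | mdeg f v = R - 1} : ℝ)} * Nat.descFactorial k (2*t)
      ≤ Nat.card {f : Sym2 (Fin n) → ℕ // ∀ v, mdeg f v ≤ R} * (n*R)^t :=
    le_trans (Nat.mul_le_mul_right _ hmono) hcount
  -- real estimates
  have hst0 : (1:ℝ) ≤ s - 2*t := by linarith
  have hdescR : (s - 2*(t:ℝ))^(2*t) ≤ (Nat.descFactorial k (2*t) : ℝ) := by
    rw [Nat.descFactorial_eq_prod_range, Nat.cast_prod]
    calc (s - 2*(t:ℝ))^(2*t) = ∏ _i ∈ Finset.range (2*t), (s - 2*(t:ℝ)) := by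
          rw [Finset.prod_const, Finset.card_range]
      _ ≤ ∏ i ∈ Finset.range (2*t), ((k - i : ℕ) : ℝ) := by
          apply Finset.prod_le_prod
          · intro i _; linarith
          · intro i hi
            rw [Finset.mem_range] at hi
            have hik : i ≤ k := by omega
            rw [Nat.cast_sub hik]
            have hi2 : i ≤ 2*t := by omega
            have hi3 : (i:ℝ) ≤ ((2*t : ℕ):ℝ) := Nat.cast_le.2 hi2
            push_cast at hi3
            linarith [hks]
  have hdpos : (0:ℝ) < (Nat.descFactorial k (2*t) : ℝ) :=
    lt_of_lt_of_le (by positivity) (le_trans (one_le_pow₀ hst0) hdescR)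
  have hDpos : (0:ℝ) < (Nat.card {f : Sym2 (Fin n) → ℕ // ∀ v, mdeg f v ≤ R} : ℝ) := by
    exact_mod_cast hD
  have hchain : mgProp n R (fun f =>
      Real.sqrt (c * n) < (Set.ncard {v | mdeg f v = R - 1} : ℝ)) ≤ q^t := by
    rw [mgProp, div_le_iff₀ hDpos]
    have h1 : (Nat.card {f : Sym2 (Fin n) → ℕ // (∀ v, mdeg f v ≤ R) ∧
          Real.sqrt (c*n) < (Set.ncard {v | mdeg f v = R - 1} : ℝ)} : ℝ)
          * (Nat.descFactorial k (2*t) : ℝ)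
        ≤ (Nat.card {f : Sym2 (Fin n) → ℕ // ∀ v, mdeg f v ≤ R} : ℝ) * ((n:ℝ)*R)^t := by
      have := hfinal_nat
      exact_mod_cast this
    have h2 : ((n:ℝ)*R)^t ≤ q^t * (s-2*(t:ℝ))^(2*t) := by
      calc ((n:ℝ)*R)^t ≤ (q * (s-2*(t:ℝ))^2)^t := pow_le_pow_left₀ (by positivity) hE2 t
        _ = q^t * ((s-2*(t:ℝ))^2)^t := mul_pow _ _ _
        _ = q^t * (s-2*(t:ℝ))^(2*t) := by rw [← pow_mul]
    have h3 : q^t * (s-2*(t:ℝ))^(2*t) ≤ q^t * (Nat.descFactorial k (2*t) : ℝ) :=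
      mul_le_mul_of_nonneg_left hdescR (pow_nonneg hq0.le t)
    have h4 : (Nat.card {f : Sym2 (Fin n) → ℕ // (∀ v, mdeg f v ≤ R) ∧
          Real.sqrt (c*n) < (Set.ncard {v | mdeg f v = R - 1} : ℝ)} : ℝ)
          * (Nat.descFactorial k (2*t) : ℝ)
        ≤ q^t * (Nat.card {f : Sym2 (Fin n) → ℕ // ∀ v, mdeg f v ≤ R} : ℝ)
          * (Nat.descFactorial k (2*t) : ℝ) := by
      calc _ ≤ (Nat.card {f : Sym2 (Fin n) → ℕ // ∀ v, mdeg f v ≤ R} : ℝ) * ((n:ℝ)*R)^t := h1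
        _ ≤ (Nat.card {f : Sym2 (Fin n) → ℕ // ∀ v, mdeg f v ≤ R} : ℝ)
            * (q^t * (Nat.descFactorial k (2*t) : ℝ)) :=
          mul_le_mul_of_nonneg_left (le_trans h2 h3) (by positivity)
        _ = _ := by ring
    exact le_of_mul_le_mul_right h4 hdpos
  have hnn : 0 ≤ mgProp n R (fun f =>
      Real.sqrt (c * n) < (Set.ncard {v | mdeg f v = R - 1} : ℝ)) := by
    rw [mgProp]
    positivity
  rw [Real.norm_eq_abs, abs_of_nonneg hnn]
  exact lt_of_le_of_lt hchain ht
end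

section
/- For every real C > 0, the maximum over all natural numbers k with 0 ≤ k ≤ C·√n of |ln((n)_k / n^k) + k²/(2n)| tends to 0 as n → ∞; in other words, uniformly for k = O(√n), the falling factorial satisfies (n)_k = n^k · exp(−k²/(2n) + o(1)). -/
lemma sumId_real (k : ℕ) : (∑ i ∈ Finset.range k, (i:ℝ)) = ((k:ℝ)^2 - k)/2 := by
  induction k with
  | zero => simp
  | succ m ih =>
    rw [Finset.sum_range_succ, ih]
    push_cast
    ring

lemma log_est {x : ℝ} (hx0 : 0 ≤ x) (hx : x ≤ 1/2) :
    |Real.log (1 - x) + x| ≤ 2 * x ^ 2 := by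
  have h1 : |x| < 1 := by rw [abs_of_nonneg hx0]; linarith
  have h := Real.abs_log_sub_add_sum_range_le h1 1
  simp only [Finset.sum_range_one, pow_one, Nat.cast_zero, zero_add, div_one] at h
  rw [abs_of_nonneg hx0] at h
  rw [add_comm]
  refine h.trans ?_
  rw [div_le_iff₀ (by linarith : (0:ℝ) < 1 - x)]
  have hxx : x^(1+1) = x^2 := by ring
  rw [hxx]
  nlinarith [mul_nonneg (sq_nonneg x) (by linarith : (0:ℝ) ≤ 1 - 2*x)]

/-- Uniformly for `k = O(√n)`, the falling factorial satisfies
`(n)_k = n^k · exp(−k²/(2n) + o(1))`: for every `C > 0`, the maximum over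
`0 ≤ k ≤ C·√n` of `|ln((n)_k / n^k) + k²/(2n)|` tends to `0` as `n → ∞`. -/
theorem stmt9 (C : ℝ) (hC : 0 < C) :
    ∀ ε > (0 : ℝ), ∃ N : ℕ, ∀ n ≥ N, ∀ k : ℕ, (k : ℝ) ≤ C * Real.sqrt n →
      |Real.log ((Nat.descFactorial n k : ℝ) / (n : ℝ) ^ k) + (k : ℝ) ^ 2 / (2 * n)| < ε := by
  intro ε hε
  set M : ℝ := max (2*C) ((2*C^3 + C/2 + 1)/ε) with hMdef
  have hM0 : 0 < M := lt_of_lt_of_le (by positivity) (le_max_left _ _)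
  refine ⟨⌈M^2⌉₊ + 1, fun n hn k hk => ?_⟩
  have hn1 : 1 ≤ n := le_trans (Nat.le_add_left 1 _) hn
  have hnR : (0:ℝ) < n := by exact_mod_cast hn1
  have hsqrtM : M ≤ Real.sqrt n := by
    rw [show M = Real.sqrt (M^2) by rw [Real.sqrt_sq hM0.le]]
    apply Real.sqrt_le_sqrt
    calc M^2 ≤ (⌈M^2⌉₊ : ℝ) := Nat.le_ceil _
      _ ≤ n := by exact_mod_cast le_trans (Nat.le_succ _) hn
  have hs0 : 0 < Real.sqrt n := Real.sqrt_pos.mpr hnR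
  have hsn : Real.sqrt n * Real.sqrt n = n := Real.mul_self_sqrt hnR.le
  have h2C : 2*C ≤ Real.sqrt n := le_trans (le_max_left _ _) hsqrtM
  have hk2 : (k:ℝ) ≤ (n:ℝ)/2 := by
    calc (k:ℝ) ≤ C * Real.sqrt n := hk
      _ ≤ (Real.sqrt n / 2) * Real.sqrt n := by
          apply mul_le_mul_of_nonneg_right _ hs0.le
          linarith
      _ = (n:ℝ)/2 := by rw [div_mul_eq_mul_div, hsn]
  have hkn : k ≤ n := by
    have : (k:ℝ) ≤ (n:ℝ) := by linarith
    exact_mod_cast this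
  have hk0 : (0:ℝ) ≤ k := Nat.cast_nonneg k
  -- product formula
  have hprod : (Nat.descFactorial n k : ℝ) = ∏ i ∈ Finset.range k, ((n:ℝ) - i) := by
    rw [Nat.descFactorial_eq_prod_range, Nat.cast_prod]
    refine Finset.prod_congr rfl (fun i hi => ?_)
    rw [Nat.cast_sub ((le_of_lt (Finset.mem_range.mp hi)).trans hkn)]
  have hfacpos : ∀ i ∈ Finset.range k, (0:ℝ) < 1 - (i:ℝ)/n := by
    intro i hi
    have hik : (i:ℝ) < k := by exact_mod_cast Finset.mem_range.mp hi
    have : (i:ℝ)/n ≤ 1/2 := by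
      rw [div_le_iff₀ hnR]; linarith
    linarith
  have hfrac : ∀ i ∈ Finset.range k, (i:ℝ)/n ≤ 1/2 := by
    intro i hi
    have hik : (i:ℝ) < k := by exact_mod_cast Finset.mem_range.mp hi
    rw [div_le_iff₀ hnR]; linarith
  have hlog : Real.log ((Nat.descFactorial n k : ℝ) / (n:ℝ)^k)
      = ∑ i ∈ Finset.range k, Real.log (1 - (i:ℝ)/n) := by
    have hpow : (n:ℝ)^k = ∏ _i ∈ Finset.range k, (n:ℝ) := by
      rw [Finset.prod_const, Finset.card_range]
    have heq : (Nat.descFactorial n k : ℝ) / (n:ℝ)^k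
        = ∏ i ∈ Finset.range k, (1 - (i:ℝ)/n) := by
      rw [hprod, hpow, ← Finset.prod_div_distrib]
      refine Finset.prod_congr rfl (fun i hi => ?_)
      rw [sub_div, div_self hnR.ne']
    rw [heq, Real.log_prod (fun i hi => (hfacpos i hi).ne')]
  rw [hlog]
  -- rearrange
  have hrearr : (∑ i ∈ Finset.range k, Real.log (1 - (i:ℝ)/n)) + (k:ℝ)^2/(2*n)
      = (∑ i ∈ Finset.range k, (Real.log (1 - (i:ℝ)/n) + (i:ℝ)/n)) + (k:ℝ)/(2*n) := by
    rw [Finset.sum_add_distrib, ← Finset.sum_div, sumId_real k]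
    field_simp
    ring
  rw [hrearr]
  -- per-term estimate
  have hterm : ∀ i ∈ Finset.range k,
      |Real.log (1 - (i:ℝ)/n) + (i:ℝ)/n| ≤ 2*((k:ℝ)/n)^2 := by
    intro i hi
    have hik : (i:ℝ) < k := by exact_mod_cast Finset.mem_range.mp hi
    have h0 : (0:ℝ) ≤ (i:ℝ)/n := by positivity
    have h1 := log_est h0 (hfrac i hi)
    refine h1.trans ?_
    have h2 : (i:ℝ)/n ≤ (k:ℝ)/n := by gcongr
    nlinarith [h0, h2]
  have hsum : |∑ i ∈ Finset.range k, (Real.log (1 - (i:ℝ)/n) + (i:ℝ)/n)|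
      ≤ (k:ℝ) * (2*((k:ℝ)/n)^2) := by
    refine (Finset.abs_sum_le_sum_abs _ _).trans ?_
    calc (∑ i ∈ Finset.range k, |Real.log (1 - (i:ℝ)/n) + (i:ℝ)/n|)
        ≤ ∑ _i ∈ Finset.range k, 2*((k:ℝ)/n)^2 := Finset.sum_le_sum hterm
      _ = (k:ℝ) * (2*((k:ℝ)/n)^2) := by
          rw [Finset.sum_const, Finset.card_range, nsmul_eq_mul]
  have hk3 : (k:ℝ)^3 ≤ C^3 * n * Real.sqrt n := by
    calc (k:ℝ)^3 ≤ (C * Real.sqrt n)^3 := pow_le_pow_left₀ hk0 hk 3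
      _ = C^3 * ((Real.sqrt n * Real.sqrt n) * Real.sqrt n) := by ring
      _ = C^3 * n * Real.sqrt n := by rw [hsn]; ring
  have habs : |(∑ i ∈ Finset.range k, (Real.log (1 - (i:ℝ)/n) + (i:ℝ)/n)) + (k:ℝ)/(2*n)|
      ≤ (k:ℝ) * (2*((k:ℝ)/n)^2) + (k:ℝ)/(2*n) := by
    refine (abs_add_le _ _).trans ?_
    have : |(k:ℝ)/(2*n)| = (k:ℝ)/(2*n) := abs_of_nonneg (by positivity)
    rw [this]
    linarith [hsum]
  refine lt_of_le_of_lt habs ?_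
  -- final numeric bound
  have hb1 : (k:ℝ) * (2*((k:ℝ)/n)^2) ≤ 2*C^3/Real.sqrt n := by
    rw [div_pow]
    rw [show (k:ℝ) * (2*((k:ℝ)^2/(n:ℝ)^2)) = 2*(k:ℝ)^3/(n:ℝ)^2 by ring]
    rw [div_le_div_iff₀ (by positivity) hs0]
    have h := mul_le_mul_of_nonneg_right hk3 hs0.le
    calc 2*(k:ℝ)^3 * Real.sqrt n ≤ 2*(C^3 * n * Real.sqrt n * Real.sqrt n) := by linarith
      _ = 2*C^3 * ((Real.sqrt n * Real.sqrt n) * n) := by ring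
      _ = 2*C^3 * (n:ℝ)^2 := by rw [hsn]; ring
  have hb2 : (k:ℝ)/(2*n) ≤ C/(2*Real.sqrt n) := by
    rw [div_le_div_iff₀ (by positivity) (by positivity)]
    have h := mul_le_mul_of_nonneg_right hk hs0.le
    calc (k:ℝ) * (2*Real.sqrt n) ≤ (C * Real.sqrt n * Real.sqrt n) * 2 := by linarith
      _ = C * (2*n) := by rw [mul_assoc C, hsn]; ring
  have hMε : (2*C^3 + C/2 + 1)/ε ≤ Real.sqrt n :=
    le_trans (le_max_right _ _) hsqrtM
  have hεn : 2*C^3 + C/2 + 1 ≤ ε * Real.sqrt n := by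
    rw [div_le_iff₀ hε] at hMε
    linarith
  have hfin : 2*C^3/Real.sqrt n + C/(2*Real.sqrt n) < ε := by
    rw [div_add_div _ _ hs0.ne' (by positivity : (2*Real.sqrt n) ≠ 0), div_lt_iff₀ (by positivity)]
    nlinarith [hs0]
  linarith
end

section
/- Let R ≥ 2 be an integer. For every integer p > 0, the proportion of graphs G in G_{n,R} which have three distinct vertices v₁, v₂, v₃, each of degree strictly less than R, such that for all distinct i, j ∈ {1,2,3} there is a path of length at most p from v_i to v_j, tends to 0 as n → ∞. -/
open Filter Topology Finset

namespace S13

attribute [local instance] Classical.propDecidable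

variable {n : ℕ}

/-- neighbours as a Finset -/
noncomputable def nbr (G : SimpleGraph (Fin n)) (v : Fin n) : Finset (Fin n) :=
  univ.filter (fun w => G.Adj v w)

lemma mem_nbr {G : SimpleGraph (Fin n)} {v w : Fin n} : w ∈ nbr G v ↔ G.Adj v w := by
  simp [nbr]

lemma degS_eq (G : SimpleGraph (Fin n)) (v : Fin n) : degS G v = (nbr G v).card := by
  classical
  rw [degS, Set.ncard_eq_toFinset_card']
  congr 1
  ext w
  simp [nbr]

def good (R : ℕ) (G : SimpleGraph (Fin n)) : Prop := ∀ v, degS G v ≤ R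

noncomputable def GF (n R : ℕ) : Finset (SimpleGraph (Fin n)) := univ.filter (good R)

lemma bot_mem_GF (R : ℕ) : (⊥ : SimpleGraph (Fin n)) ∈ GF n R := by
  simp only [GF, mem_filter, mem_univ, true_and]
  intro v
  simp [degS_eq, nbr]

noncomputable def lowF (R : ℕ) (G : SimpleGraph (Fin n)) : Finset (Fin n) :=
  univ.filter (fun v => degS G v < R)

lemma mem_lowF {R : ℕ} {G : SimpleGraph (Fin n)} {v : Fin n} :
    v ∈ lowF R G ↔ degS G v < R := by simp [lowF]

/-- ordered adjacent pairs -/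
noncomputable def AP (G : SimpleGraph (Fin n)) : Finset (Fin n × Fin n) :=
  (univ ×ˢ univ).filter (fun q => G.Adj q.1 q.2)

lemma mem_AP {G : SimpleGraph (Fin n)} {q : Fin n × Fin n} : q ∈ AP G ↔ G.Adj q.1 q.2 := by
  simp [AP]

lemma card_AP (G : SimpleGraph (Fin n)) : (AP G).card = ∑ v : Fin n, degS G v := by
  classical
  rw [card_eq_sum_card_fiberwise (f := fun q => q.1) (t := univ) (fun q _ => mem_univ _)]
  refine Finset.sum_congr rfl (fun v _ => ?_)
  rw [degS_eq]
  apply Finset.card_bij (fun q _ => q.2)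
  · intro q hq
    simp only [mem_filter, mem_AP] at hq
    exact mem_nbr.2 (hq.2 ▸ hq.1)
  · intro q hq q' hq' h
    simp only [mem_filter, mem_AP] at hq hq'
    exact Prod.ext (hq.2.trans hq'.2.symm) h
  · intro b hb
    exact ⟨(v, b), by simp [mem_filter, mem_AP, mem_nbr.1 hb], rfl⟩

lemma card_AP_le {R : ℕ} {G : SimpleGraph (Fin n)} (hG : good R G) :
    (AP G).card ≤ n * R := by
  rw [card_AP]
  calc ∑ v : Fin n, degS G v ≤ ∑ _v : Fin n, R := Finset.sum_le_sum (fun v _ => hG v)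
    _ = n * R := by simp [mul_comm]

lemma card_AP_ge {R : ℕ} (G : SimpleGraph (Fin n)) :
    (n - (lowF R G).card) * R ≤ (AP G).card := by
  rw [card_AP]
  calc (n - (lowF R G).card) * R = ∑ _v ∈ (univ \ lowF R G), R := by
        rw [Finset.sum_const, smul_eq_mul, card_sdiff_of_subset (subset_univ _), card_univ,
          Fintype.card_fin]
    _ ≤ ∑ v ∈ (univ \ lowF R G), degS G v := by
        refine Finset.sum_le_sum (fun v hv => ?_)
        simp only [Finset.mem_sdiff, mem_lowF] at hv
        omega
    _ ≤ ∑ v : Fin n, degS G v := Finset.sum_le_sum_of_subset (sdiff_subset)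

/-! ### Balls -/

noncomputable def ballF (G : SimpleGraph (Fin n)) (u : Fin n) (r : ℕ) : Finset (Fin n) :=
  univ.filter (fun v => ∃ w : G.Walk u v, w.length ≤ r)

lemma mem_ballF {G : SimpleGraph (Fin n)} {u v : Fin n} {r : ℕ} :
    v ∈ ballF G u r ↔ ∃ w : G.Walk u v, w.length ≤ r := by simp [ballF]

lemma self_mem_ballF {G : SimpleGraph (Fin n)} {u : Fin n} {r : ℕ} : u ∈ ballF G u r :=
  mem_ballF.2 ⟨SimpleGraph.Walk.nil, by simp⟩

lemma ballF_mono {G : SimpleGraph (Fin n)} {u : Fin n} {r r' : ℕ} (h : r ≤ r') :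
    ballF G u r ⊆ ballF G u r' := by
  intro v hv
  obtain ⟨w, hw⟩ := mem_ballF.1 hv
  exact mem_ballF.2 ⟨w, hw.trans h⟩

lemma ball_step {G : SimpleGraph (Fin n)} {u z x : Fin n} {r : ℕ}
    (hz : z ∈ ballF G u r) (hadj : G.Adj z x) : x ∈ ballF G u (r + 1) := by
  obtain ⟨w, hw⟩ := mem_ballF.1 hz
  exact mem_ballF.2 ⟨w.concat hadj, by rw [SimpleGraph.Walk.length_concat]; omega⟩

lemma support_subset_ballF {G : SimpleGraph (Fin n)} {u v : Fin n}
    (w : G.Walk u v) : ∀ r, w.length ≤ r → ∀ x ∈ w.support, x ∈ ballF G u r := by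
  induction w with
  | nil =>
    intro r _ x hx
    simp only [SimpleGraph.Walk.support_nil, List.mem_cons, List.not_mem_nil, or_false] at hx
    subst hx; exact self_mem_ballF
  | @cons a b c hadj w ih =>
    intro r hr x hx
    simp only [SimpleGraph.Walk.length_cons] at hr
    simp only [SimpleGraph.Walk.support_cons, List.mem_cons] at hx
    rcases hx with rfl | hx
    · exact self_mem_ballF
    · have hr1 : 1 ≤ r := by omega
      have := ih (r - 1) (by omega) x hx
      -- x ∈ ballF G b (r-1), Adj a b; so x ∈ ballF G a r
      obtain ⟨w', hw'⟩ := mem_ballF.1 this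
      exact mem_ballF.2 ⟨SimpleGraph.Walk.cons hadj w', by
        rw [SimpleGraph.Walk.length_cons]; omega⟩

lemma edges_in_ballF {G : SimpleGraph (Fin n)} {u v : Fin n} {r : ℕ}
    (w : G.Walk u v) (hw : w.length ≤ r) {a b : Fin n} (he : s(a, b) ∈ w.edges) :
    a ∈ ballF G u r ∧ b ∈ ballF G u r :=
  ⟨support_subset_ballF w r hw a (w.fst_mem_support_of_mem_edges he),
   support_subset_ballF w r hw b (w.snd_mem_support_of_mem_edges he)⟩

lemma card_ballF {R : ℕ} {G : SimpleGraph (Fin n)} (hG : good R G) (u : Fin n) (r : ℕ) :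
    (ballF G u r).card ≤ (R + 1) ^ r := by
  induction r with
  | zero =>
    have : ballF G u 0 ⊆ {u} := by
      intro v hv
      obtain ⟨w, hw⟩ := mem_ballF.1 hv
      have := SimpleGraph.Walk.eq_of_length_eq_zero (Nat.le_zero.1 hw)
      simp [this]
    simpa using Finset.card_le_card this
  | succ r ih =>
    have hsub : ballF G u (r + 1) ⊆ (ballF G u r).biUnion (fun z => insert z (nbr G z)) := by
      intro v hv
      obtain ⟨w, hw⟩ := mem_ballF.1 hv
      by_cases hlen : w.length ≤ r
      · exact Finset.mem_biUnion.2 ⟨v, mem_ballF.2 ⟨w, hlen⟩, Finset.mem_insert_self _ _⟩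
      · -- length = r+1 ≥ 1; decompose from the v end using reverse
        have aux : ∀ (a : Fin n) (w' : G.Walk a u), w'.length ≤ r + 1 →
            a ∈ (ballF G u r).biUnion (fun z => insert z (nbr G z)) := by
          intro a w' hw'
          cases w' with
          | nil => exact Finset.mem_biUnion.2 ⟨u, self_mem_ballF, Finset.mem_insert_self _ _⟩
          | @cons _ z _ hadj w₂ =>
            have hz : z ∈ ballF G u r := by
              refine mem_ballF.2 ⟨w₂.reverse, ?_⟩
              rw [SimpleGraph.Walk.length_reverse]
              simp only [SimpleGraph.Walk.length_cons] at hw'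
              omega
            exact Finset.mem_biUnion.2 ⟨z, hz, Finset.mem_insert.2 (Or.inr
              (mem_nbr.2 hadj.symm))⟩
        exact aux v w.reverse (by rw [SimpleGraph.Walk.length_reverse]; exact hw)
    calc (ballF G u (r + 1)).card ≤ _ := Finset.card_le_card hsub
      _ ≤ ∑ z ∈ ballF G u r, (insert z (nbr G z)).card := Finset.card_biUnion_le
      _ ≤ ∑ _z ∈ ballF G u r, (R + 1) := by
        refine Finset.sum_le_sum (fun z _ => ?_)
        calc (insert z (nbr G z)).card ≤ (nbr G z).card + 1 := Finset.card_insert_le _ _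
          _ ≤ R + 1 := by have := hG z; rw [degS_eq] at this; omega
      _ ≤ (R + 1) ^ r * (R + 1) := by
        rw [Finset.sum_const, smul_eq_mul]
        exact Nat.mul_le_mul_right _ ih
      _ = (R + 1) ^ (r + 1) := by ring

/-- If every edge of `G` inside the ball survives into `G'`, the ball of `G`
is contained in the ball of `G'`. -/
lemma ballF_subset_of_adj {G G' : SimpleGraph (Fin n)} {u : Fin n} {r : ℕ}
    (h : ∀ a b : Fin n, G.Adj a b → a ∈ ballF G u r → b ∈ ballF G u r → G'.Adj a b) :
    ballF G u r ⊆ ballF G' u r := by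
  intro v hv
  obtain ⟨w, hw⟩ := mem_ballF.1 hv
  have hedges : ∀ e ∈ w.edges, e ∈ G'.edgeSet := by
    intro e he
    induction e using Sym2.ind with
    | _ a b =>
      have hab : G.Adj a b := (SimpleGraph.mem_edgeSet G).1 (w.edges_subset_edgeSet he)
      have hmem := edges_in_ballF w hw he
      exact (SimpleGraph.mem_edgeSet G').2 (h a b hab hmem.1 hmem.2)
  refine mem_ballF.2 ⟨w.transfer G' hedges, ?_⟩
  rw [SimpleGraph.Walk.length_transfer]
  exact hw

/-! ### Surgery -/

noncomputable def addE (G : SimpleGraph (Fin n)) (a b : Fin n) : SimpleGraph (Fin n) :=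
  G ⊔ SimpleGraph.fromEdgeSet {s(a, b)}

noncomputable def delE (G : SimpleGraph (Fin n)) (a b : Fin n) : SimpleGraph (Fin n) :=
  G.deleteEdges {s(a, b)}

lemma addE_adj {G : SimpleGraph (Fin n)} {a b x y : Fin n} :
    (addE G a b).Adj x y ↔ G.Adj x y ∨ (s(x, y) = s(a, b) ∧ x ≠ y) := by
  simp [addE, SimpleGraph.fromEdgeSet_adj]

lemma delE_adj {G : SimpleGraph (Fin n)} {a b x y : Fin n} :
    (delE G a b).Adj x y ↔ G.Adj x y ∧ s(x, y) ≠ s(a, b) := by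
  simp [delE, SimpleGraph.deleteEdges_adj]

lemma adj_of_sym2_eq {G : SimpleGraph (Fin n)} {a b x y : Fin n} (h : G.Adj a b)
    (he : s(x, y) = s(a, b)) : G.Adj x y := by
  rcases Sym2.eq_iff.1 he with ⟨rfl, rfl⟩ | ⟨rfl, rfl⟩
  · exact h
  · exact h.symm

lemma nbr_addE {G : SimpleGraph (Fin n)} {a b : Fin n} (hab : a ≠ b) (v : Fin n) :
    nbr (addE G a b) v =
      if v = a then insert b (nbr G v) else if v = b then insert a (nbr G v)
      else nbr G v := by
  ext w
  split_ifs with h1 h2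
  · subst h1
    simp only [mem_nbr, addE_adj, Finset.mem_insert]
    have e1 : s(v, w) = s(v, b) ∧ v ≠ w → w = b := by
      rintro ⟨he, hne⟩
      rcases Sym2.eq_iff.1 he with ⟨-, rfl⟩ | ⟨rfl, rfl⟩
      · rfl
      · exact absurd rfl hne
    have e2 : w = b → s(v, w) = s(v, b) ∧ v ≠ w := by rintro rfl; exact ⟨rfl, hab⟩
    tauto
  · subst h2
    simp only [mem_nbr, addE_adj, Finset.mem_insert]
    have e1 : s(v, w) = s(a, v) ∧ v ≠ w → w = a := by
      rintro ⟨he, hne⟩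
      rcases Sym2.eq_iff.1 he with ⟨rfl, rfl⟩ | ⟨-, rfl⟩
      · exact absurd rfl hne
      · rfl
    have e2 : w = a → s(v, w) = s(a, v) ∧ v ≠ w := by
      rintro rfl; exact ⟨Sym2.eq_swap, hab.symm⟩
    tauto
  · simp only [mem_nbr, addE_adj]
    have e1 : s(v, w) = s(a, b) → False := by
      intro he
      rcases Sym2.eq_iff.1 he with ⟨rfl, rfl⟩ | ⟨rfl, rfl⟩
      · exact h1 rfl
      · exact h2 rfl
    tauto

lemma nbr_delE {G : SimpleGraph (Fin n)} {a b : Fin n} (hab : a ≠ b) (v : Fin n) :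
    nbr (delE G a b) v =
      if v = a then (nbr G v).erase b else if v = b then (nbr G v).erase a
      else nbr G v := by
  ext w
  split_ifs with h1 h2
  · subst h1
    simp only [mem_nbr, delE_adj, Finset.mem_erase]
    have e1 : w = b → s(v, w) = s(v, b) := by rintro rfl; rfl
    have e2 : s(v, w) = s(v, b) → G.Adj v w → w = b := by
      intro he hadj
      rcases Sym2.eq_iff.1 he with ⟨-, rfl⟩ | ⟨h₁, h₂⟩
      · rfl
      · subst h₂; exact absurd rfl hadj.ne
    tauto
  · subst h2
    simp only [mem_nbr, delE_adj, Finset.mem_erase]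
    have e1 : w = a → s(v, w) = s(a, v) := by rintro rfl; exact Sym2.eq_swap
    have e2 : s(v, w) = s(a, v) → G.Adj v w → w = a := by
      intro he hadj
      rcases Sym2.eq_iff.1 he with ⟨h₁, h₂⟩ | ⟨-, rfl⟩
      · subst h₂; exact absurd rfl hadj.ne
      · rfl
    tauto
  · simp only [mem_nbr, delE_adj]
    have e1 : s(v, w) = s(a, b) → False := by
      intro he
      rcases Sym2.eq_iff.1 he with ⟨rfl, rfl⟩ | ⟨rfl, rfl⟩
      · exact h1 rfl
      · exact h2 rfl
    tauto

lemma degS_addE {G : SimpleGraph (Fin n)} {a b : Fin n} (hab : a ≠ b)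
    (hnadj : ¬ G.Adj a b) (v : Fin n) :
    degS (addE G a b) v = if v = a ∨ v = b then degS G v + 1 else degS G v := by
  rw [degS_eq, degS_eq, nbr_addE hab]
  by_cases h1 : v = a
  · subst h1
    rw [if_pos rfl, if_pos (Or.inl rfl), Finset.card_insert_of_notMem (by
      simp only [mem_nbr]; exact fun h => hnadj h)]
  · by_cases h2 : v = b
    · subst h2
      rw [if_neg h1, if_pos rfl, if_pos (Or.inr rfl), Finset.card_insert_of_notMem (by
        simp only [mem_nbr]; exact fun h => hnadj h.symm)]
    · rw [if_neg h1, if_neg h2, if_neg (by tauto)]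

lemma degS_delE {G : SimpleGraph (Fin n)} {a b : Fin n} (hab : a ≠ b)
    (hadj : G.Adj a b) (v : Fin n) :
    degS (delE G a b) v = if v = a ∨ v = b then degS G v - 1 else degS G v := by
  rw [degS_eq, degS_eq, nbr_delE hab]
  by_cases h1 : v = a
  · subst h1
    rw [if_pos rfl, if_pos (Or.inl rfl), Finset.card_erase_of_mem (mem_nbr.2 hadj)]
  · by_cases h2 : v = b
    · subst h2
      rw [if_neg h1, if_pos rfl, if_pos (Or.inr rfl),
        Finset.card_erase_of_mem (mem_nbr.2 hadj.symm)]
    · rw [if_neg h1, if_neg h2, if_neg (by tauto)]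

/-- recovery for the one-edge switching -/
lemma recover_one {G : SimpleGraph (Fin n)} {a b : Fin n}
    (hnadj : ¬ G.Adj a b) : delE (addE G a b) a b = G := by
  ext x y
  simp only [delE_adj, addE_adj]
  constructor
  · rintro ⟨h | ⟨he, -⟩, hne⟩
    · exact h
    · exact absurd he hne
  · intro h
    exact ⟨Or.inl h, fun he => hnadj (adj_of_sym2_eq h he.symm)⟩

/-- recovery for the three-edge switching -/
lemma recover_three {G : SimpleGraph (Fin n)} {v w x y : Fin n}
    (hxy : G.Adj x y) (hvx : ¬ G.Adj v x) (hwy : ¬ G.Adj w y) :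
    addE (delE (delE (addE (addE (delE G x y) v x) w y) v x) w y) x y = G := by
  ext z z'
  simp only [addE_adj, delE_adj]
  have hq1 : s(z, z') = s(x, y) → G.Adj z z' ∧ z ≠ z' :=
    fun h => ⟨adj_of_sym2_eq hxy h, (adj_of_sym2_eq hxy h).ne⟩
  have hq2 : s(z, z') = s(v, x) → ¬ G.Adj z z' :=
    fun h hc => hvx (adj_of_sym2_eq hc (Eq.symm h) )
  have hq3 : s(z, z') = s(w, y) → ¬ G.Adj z z' :=
    fun h hc => hwy (adj_of_sym2_eq hc (Eq.symm h))
  tauto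


/-! ### Generic double counting -/

lemma dcount {γ α : Type*} [DecidableEq α] (T : Finset γ) (src tgt : γ → α)
    (X Y : Finset α) (F B : ℕ)
    (hfwd : ∀ a ∈ X, F ≤ (T.filter (fun c => src c = a)).card)
    (htgt : ∀ c ∈ T, tgt c ∈ Y)
    (hfib : ∀ a ∈ Y, (T.filter (fun c => tgt c = a)).card ≤ B) :
    X.card * F ≤ Y.card * B := by
  classical
  have h1 : X.card * F ≤ T.card := by
    have e1 : (T.filter (fun c => src c ∈ X)).card
        = ∑ a ∈ X, ((T.filter (fun c => src c ∈ X)).filter (fun c => src c = a)).card :=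
      card_eq_sum_card_fiberwise (fun c hc => (Finset.mem_filter.1 hc).2)
    have e2 : ∀ a ∈ X, ((T.filter (fun c => src c ∈ X)).filter (fun c => src c = a))
        = T.filter (fun c => src c = a) := by
      intro a ha
      ext c
      simp only [Finset.mem_filter]
      constructor
      · rintro ⟨⟨hc, -⟩, h⟩; exact ⟨hc, h⟩
      · rintro ⟨hc, h⟩; exact ⟨⟨hc, h ▸ ha⟩, h⟩
    calc X.card * F = ∑ _a ∈ X, F := by rw [Finset.sum_const, smul_eq_mul]
      _ ≤ ∑ a ∈ X, (T.filter (fun c => src c = a)).card :=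
          Finset.sum_le_sum hfwd
      _ = (T.filter (fun c => src c ∈ X)).card := by
          rw [e1]; exact Finset.sum_congr rfl (fun a ha => by rw [e2 a ha])
      _ ≤ T.card := Finset.card_le_card (Finset.filter_subset _ _)
  have h2 : T.card ≤ Y.card * B := by
    rw [card_eq_sum_card_fiberwise htgt]
    calc ∑ a ∈ Y, (T.filter (fun c => tgt c = a)).card ≤ ∑ _a ∈ Y, B :=
          Finset.sum_le_sum hfib
      _ = Y.card * B := by rw [Finset.sum_const, smul_eq_mul]
  exact h1.trans h2

/-! ### Switching A : graphs with many low vertices are rare -/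

variable (R : ℕ)

noncomputable def XA (n R t : ℕ) : Finset (SimpleGraph (Fin n)) :=
  (GF n R).filter (fun G => t ≤ (lowF R G).card)

/-- valid pairs for switching A -/
noncomputable def pairsA (G : SimpleGraph (Fin n)) : Finset (Fin n × Fin n) :=
  (lowF R G).biUnion (fun a =>
    ((lowF R G) \ insert a (nbr G a)).image (fun b => (a, b)))

lemma mem_pairsA {G : SimpleGraph (Fin n)} {q : Fin n × Fin n} :
    q ∈ pairsA R G ↔ q.1 ∈ lowF R G ∧ q.2 ∈ lowF R G ∧ q.1 ≠ q.2 ∧ ¬ G.Adj q.1 q.2 := by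
  simp only [pairsA, Finset.mem_biUnion, Finset.mem_image, Finset.mem_sdiff,
    Finset.mem_insert, mem_nbr]
  constructor
  · rintro ⟨a, ha, b, ⟨hb, hne⟩, rfl⟩
    exact ⟨ha, hb, fun h => hne (Or.inl h.symm), fun h => hne (Or.inr h)⟩
  · rintro ⟨h1, h2, h3, h4⟩
    refine ⟨q.1, h1, q.2, ⟨h2, fun h => ?_⟩, rfl⟩
    rcases h with h | h
    · exact h3 h.symm
    · exact h4 h

lemma card_pairsA_ge {G : SimpleGraph (Fin n)} (t : ℕ) (ht : t ≤ (lowF R G).card) :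
    t * (t - R) ≤ (pairsA R G).card := by
  classical
  have hdisj : ∀ a ∈ lowF R G, ∀ a' ∈ lowF R G, a ≠ a' →
      Disjoint (((lowF R G) \ insert a (nbr G a)).image (fun b => (a, b)))
        (((lowF R G) \ insert a' (nbr G a')).image (fun b => (a', b))) := by
    intro a _ a' _ hne
    simp only [Finset.disjoint_left, Finset.mem_image]
    rintro q ⟨b, -, rfl⟩ ⟨b', -, h⟩
    exact hne (congrArg Prod.fst h).symm
  rw [pairsA, Finset.card_biUnion hdisj]
  have hcard : ∀ a ∈ lowF R G, (lowF R G).card - R ≤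
      (((lowF R G) \ insert a (nbr G a)).image (fun b => (a, b))).card := by
    intro a ha
    rw [Finset.card_image_of_injOn (fun b _ b' _ h => congrArg Prod.snd h)]
    have h1 : (insert a (nbr G a)).card ≤ R := by
      have := mem_lowF.1 ha
      rw [degS_eq] at this
      calc (insert a (nbr G a)).card ≤ (nbr G a).card + 1 := Finset.card_insert_le _ _
        _ ≤ R := by omega
    calc (lowF R G).card - R ≤ (lowF R G).card - (insert a (nbr G a)).card := by omega
      _ ≤ _ := Finset.le_card_sdiff _ _
  calc t * (t - R) ≤ (lowF R G).card * ((lowF R G).card - R) :=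
        Nat.mul_le_mul ht (by omega)
    _ = ∑ _a ∈ lowF R G, ((lowF R G).card - R) := by rw [Finset.sum_const, smul_eq_mul]
    _ ≤ _ := Finset.sum_le_sum hcard

lemma switchA (n t : ℕ) :
    (XA n R t).card * (t * (t - R)) ≤ (GF n R).card * (n * R) := by
  classical
  -- moves
  set T : Finset (SimpleGraph (Fin n) × (Fin n × Fin n)) :=
    (XA n R t).biUnion (fun G => (pairsA R G).image (fun q => (G, q))) with hT
  have memT : ∀ c : SimpleGraph (Fin n) × (Fin n × Fin n),
      c ∈ T ↔ c.1 ∈ XA n R t ∧ c.2 ∈ pairsA R c.1 := by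
    intro c
    simp only [hT, Finset.mem_biUnion, Finset.mem_image]
    constructor
    · rintro ⟨G, hG, q, hq, rfl⟩; exact ⟨hG, hq⟩
    · rintro ⟨h1, h2⟩; exact ⟨c.1, h1, c.2, h2, rfl⟩
  refine dcount T (fun c => c.1) (fun c => addE c.1 c.2.1 c.2.2) (XA n R t) (GF n R)
    (t * (t - R)) (n * R) ?_ ?_ ?_
  · -- forward
    intro G hG
    have hsub : (pairsA R G).image (fun q => (G, q)) ⊆
        T.filter (fun c => c.1 = G) := by
      intro c hc
      obtain ⟨q, hq, rfl⟩ := Finset.mem_image.1 hc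
      exact Finset.mem_filter.2 ⟨(memT _).2 ⟨hG, hq⟩, rfl⟩
    calc t * (t - R) ≤ (pairsA R G).card :=
          card_pairsA_ge R t ((Finset.mem_filter.1 hG).2)
      _ = ((pairsA R G).image (fun q => (G, q))).card :=
          (Finset.card_image_of_injOn (fun q _ q' _ h => (Prod.ext_iff.1 h).2)).symm
      _ ≤ _ := Finset.card_le_card hsub
  · -- target in GF
    rintro ⟨G, a, b⟩ hc
    obtain ⟨hG, hq⟩ := (memT _).1 hc
    rw [mem_pairsA] at hq
    obtain ⟨ha, hb, hne, hnadj⟩ := hq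
    simp only [GF, Finset.mem_filter, Finset.mem_univ, true_and]
    intro v
    rw [degS_addE hne hnadj]
    have hG' : good R G := (Finset.mem_filter.1 ((Finset.mem_filter.1 hG).1)).2
    split_ifs with h
    · rcases h with rfl | rfl
      · exact mem_lowF.1 ha
      · exact mem_lowF.1 hb
    · exact hG' v
  · -- fiber bound
    intro G' hG'
    have hgood : good R G' := (Finset.mem_filter.1 hG').2
    refine le_trans (Finset.card_le_card_of_injOn (t := AP G') (fun c => c.2) ?_ ?_) ?_
    · -- maps into AP G'
      rintro ⟨G, a, b⟩ hc
      simp only [Finset.coe_filter, Set.mem_setOf_eq] at hc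
      obtain ⟨hcT, htgt⟩ := hc
      obtain ⟨hG, hq⟩ := (memT _).1 hcT
      rw [mem_pairsA] at hq
      rw [Finset.mem_coe, mem_AP, ← htgt]
      exact addE_adj.2 (Or.inr ⟨rfl, hq.2.2.1⟩)
    · -- injective
      rintro ⟨G, a, b⟩ hc ⟨H, a', b'⟩ hc' heq
      simp only [Finset.coe_filter, Set.mem_setOf_eq] at hc hc'
      obtain ⟨hcT, htgt⟩ := hc
      obtain ⟨hcT', htgt'⟩ := hc'
      obtain ⟨hG, hq⟩ := (memT _).1 hcT
      obtain ⟨hG', hq'⟩ := (memT _).1 hcT'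
      rw [mem_pairsA] at hq hq'
      simp only at heq
      have hab : a = a' ∧ b = b' := Prod.ext_iff.1 heq
      obtain ⟨rfl, rfl⟩ := hab
      have : G = H := by
        rw [← recover_one (G := G) (a := a) (b := b) hq.2.2.2,
          ← recover_one (G := H) (a := a) (b := b) hq'.2.2.2, htgt, htgt']
      rw [this]
    · -- card AP
      exact card_AP_le hgood


/-! ### Switching B : bad graphs with few low vertices are rare -/

def Bad (R p : ℕ) (G : SimpleGraph (Fin n)) : Prop :=
  ∃ v₁ v₂ v₃ : Fin n, v₁ ≠ v₂ ∧ v₁ ≠ v₃ ∧ v₂ ≠ v₃ ∧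
    degS G v₁ < R ∧ degS G v₂ < R ∧ degS G v₃ < R ∧
    (∃ w : G.Walk v₁ v₂, w.IsPath ∧ w.length ≤ p) ∧
    (∃ w : G.Walk v₁ v₃, w.IsPath ∧ w.length ≤ p) ∧
    (∃ w : G.Walk v₂ v₃, w.IsPath ∧ w.length ≤ p)

def WitP (R p : ℕ) (G : SimpleGraph (Fin n)) (z : Fin n × Fin n × Fin n) : Prop :=
  z.1 ≠ z.2.1 ∧ z.1 ≠ z.2.2 ∧ z.2.1 ≠ z.2.2 ∧
  z.1 ∈ lowF R G ∧ z.2.1 ∈ lowF R G ∧ z.2.2 ∈ lowF R G ∧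
  z.2.1 ∈ ballF G z.1 p ∧ z.2.2 ∈ ballF G z.1 p

lemma bad_wit {R p : ℕ} {G : SimpleGraph (Fin n)} (h : Bad R p G) :
    ∃ z, WitP R p G z := by
  obtain ⟨v₁, v₂, v₃, h12, h13, h23, d1, d2, d3, ⟨w12, -, l12⟩, ⟨w13, -, l13⟩, -⟩ := h
  exact ⟨(v₁, v₂, v₃), h12, h13, h23, mem_lowF.2 d1, mem_lowF.2 d2, mem_lowF.2 d3,
    mem_ballF.2 ⟨w12, l12⟩, mem_ballF.2 ⟨w13, l13⟩⟩

noncomputable def wit (R p : ℕ) [NeZero n] (G : SimpleGraph (Fin n)) :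
    Fin n × Fin n × Fin n :=
  if h : ∃ z, WitP R p G z then h.choose else default

lemma wit_spec {R p : ℕ} [NeZero n] {G : SimpleGraph (Fin n)} (h : Bad R p G) :
    WitP R p G (wit R p G) := by
  have h' : ∃ z, WitP R p G z := bad_wit h
  rw [wit, dif_pos h']
  exact h'.choose_spec

noncomputable def XB (n R p t : ℕ) : Finset (SimpleGraph (Fin n)) :=
  (GF n R).filter (fun G => Bad R p G ∧ (lowF R G).card < t)

noncomputable def YB (n R t : ℕ) : Finset (SimpleGraph (Fin n)) :=
  (GF n R).filter (fun G => (lowF R G).card < t)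

noncomputable def movesB (R p : ℕ) [NeZero n] (G : SimpleGraph (Fin n)) :
    Finset (Fin n × Fin n) :=
  (AP G).filter (fun q => q.1 ∉ ballF G (wit R p G).1 (2 * p) ∧
    q.2 ∉ ballF G (wit R p G).1 (2 * p))

lemma mem_movesB {R p : ℕ} [NeZero n] {G : SimpleGraph (Fin n)} {q : Fin n × Fin n} :
    q ∈ movesB R p G ↔ G.Adj q.1 q.2 ∧ q.1 ∉ ballF G (wit R p G).1 (2 * p) ∧
      q.2 ∉ ballF G (wit R p G).1 (2 * p) := by
  simp [movesB, mem_AP, and_assoc]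

noncomputable def tgtB (R p : ℕ) [NeZero n]
    (c : SimpleGraph (Fin n) × Fin n × Fin n) : SimpleGraph (Fin n) :=
  addE (addE (delE c.1 c.2.1 c.2.2) (wit R p c.1).2.1 c.2.1) (wit R p c.1).2.2 c.2.2

lemma factsB {R p : ℕ} [NeZero n] (hp : 1 ≤ p) {G : SimpleGraph (Fin n)}
    (hgood : good R G) (hbad : Bad R p G) {x y : Fin n}
    (hm : (x, y) ∈ movesB R p G) :
    good R (tgtB R p (G, x, y)) ∧
    lowF R (tgtB R p (G, x, y)) ⊆ lowF R G ∧
    (wit R p G).1 ∈ lowF R (tgtB R p (G, x, y)) ∧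
    (wit R p G).2.1 ∈ ballF (tgtB R p (G, x, y)) (wit R p G).1 p ∧
    (wit R p G).2.2 ∈ ballF (tgtB R p (G, x, y)) (wit R p G).1 p ∧
    (tgtB R p (G, x, y)).Adj (wit R p G).2.1 x ∧
    (tgtB R p (G, x, y)).Adj (wit R p G).2.2 y ∧
    addE (delE (delE (tgtB R p (G, x, y)) (wit R p G).2.1 x) (wit R p G).2.2 y) x y
      = G := by
  obtain ⟨huv, huw, hvw, hul, hvl, hwl, hvball, hwball⟩ := wit_spec hbad
  set u := (wit R p G).1 with hu
  set v := (wit R p G).2.1 with hv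
  set w := (wit R p G).2.2 with hw
  obtain ⟨hadjxy, hxB, hyB⟩ := mem_movesB.1 hm
  have hp2 : p ≤ 2 * p := by omega
  have hp1 : p + 1 ≤ 2 * p := by omega
  have huB : u ∈ ballF G u (2 * p) := self_mem_ballF
  have hvB : v ∈ ballF G u (2 * p) := ballF_mono hp2 hvball
  have hwB : w ∈ ballF G u (2 * p) := ballF_mono hp2 hwball
  -- distinctness
  have hxu : x ≠ u := fun h => hxB (by rw [h]; exact huB)
  have hxv : x ≠ v := fun h => hxB (by rw [h]; exact hvB)
  have hxw : x ≠ w := fun h => hxB (by rw [h]; exact hwB)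
  have hyu : y ≠ u := fun h => hyB (by rw [h]; exact huB)
  have hyv : y ≠ v := fun h => hyB (by rw [h]; exact hvB)
  have hyw : y ≠ w := fun h => hyB (by rw [h]; exact hwB)
  have hxyne : x ≠ y := hadjxy.ne
  -- non-adjacency
  have hvx : ¬ G.Adj v x := fun h =>
    hxB (ballF_mono hp1 (ball_step hvball h))
  have hwy : ¬ G.Adj w y := fun h =>
    hyB (ballF_mono hp1 (ball_step hwball h))
  -- the three stages
  set H1 := delE G x y with hH1
  set H2 := addE H1 v x with hH2
  have n1 : ¬ H1.Adj v x := by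
    rw [hH1, delE_adj]
    exact fun hc => hvx hc.1
  have n2 : ¬ H2.Adj w y := by
    rw [hH2, addE_adj]
    push_neg
    constructor
    · rw [hH1, delE_adj]; intro hc; exact absurd hc.1 hwy
    · intro he
      exfalso
      rcases Sym2.eq_iff.1 he with ⟨h1, -⟩ | ⟨h1, -⟩
      · exact hvw h1.symm
      · exact hxw h1.symm
  have htgt : tgtB R p (G, x, y) = addE H2 w y := rfl
  have hd1 : ∀ z, degS H1 z = if z = x ∨ z = y then degS G z - 1 else degS G z :=
    degS_delE hxyne hadjxy
  have hd2 : ∀ z, degS H2 z = if z = v ∨ z = x then degS H1 z + 1 else degS H1 z :=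
    degS_addE hxv.symm n1
  have hd3 : ∀ z, degS (addE H2 w y) z =
      if z = w ∨ z = y then degS H2 z + 1 else degS H2 z :=
    degS_addE hyw.symm n2
  have hdegx1 : 1 ≤ degS G x := by
    rw [degS_eq]
    exact Finset.card_pos.2 ⟨y, mem_nbr.2 hadjxy⟩
  have hdegy1 : 1 ≤ degS G y := by
    rw [degS_eq]
    exact Finset.card_pos.2 ⟨x, mem_nbr.2 hadjxy.symm⟩
  -- per-vertex degree description
  have hdeg : ∀ z, degS (addE H2 w y) z =
      if z = v ∨ z = w then degS G z + 1 else degS G z := by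
    intro z
    rw [hd3 z, hd2 z, hd1 z]
    by_cases hzv : z = v
    · subst hzv
      rw [if_neg (by push_neg; exact ⟨hvw, hyv.symm⟩), if_pos (Or.inl rfl),
        if_neg (by push_neg; exact ⟨hxv.symm, hyv.symm⟩), if_pos (Or.inl rfl)]
    · by_cases hzw : z = w
      · subst hzw
        rw [if_pos (Or.inl rfl), if_neg (by push_neg; exact ⟨hvw.symm, hxw.symm⟩),
          if_neg (by push_neg; exact ⟨hxw.symm, hyw.symm⟩), if_pos (Or.inr rfl)]
      · by_cases hzx : z = x
        · subst hzx
          rw [if_neg (by push_neg; exact ⟨hxw, hxyne⟩), if_pos (Or.inr rfl),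
            if_pos (Or.inl rfl), if_neg (by push_neg; exact ⟨hxv, hxw⟩)]
          omega
        · by_cases hzy : z = y
          · subst hzy
            rw [if_pos (Or.inr rfl), if_neg (by push_neg; exact ⟨hyv, hxyne.symm⟩),
              if_pos (Or.inr rfl), if_neg (by push_neg; exact ⟨hyv, hyw⟩)]
            omega
          · rw [if_neg (by push_neg; exact ⟨hzw, hzy⟩),
              if_neg (by push_neg; exact ⟨hzv, hzx⟩),
              if_neg (by push_neg; exact ⟨hzx, hzy⟩),
              if_neg (by push_neg; exact ⟨hzv, hzw⟩)]
  have hmono : ∀ z, degS G z ≤ degS (addE H2 w y) z := by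
    intro z
    rw [hdeg z]
    split_ifs <;> omega
  have hgood' : good R (addE H2 w y) := by
    intro z
    rw [hdeg z]
    split_ifs with h
    · rcases h with rfl | rfl
      · have := mem_lowF.1 hvl; omega
      · have := mem_lowF.1 hwl; omega
    · exact hgood z
  have hlowsub : lowF R (addE H2 w y) ⊆ lowF R G := by
    intro z hz
    rw [mem_lowF] at hz ⊢
    exact lt_of_le_of_lt (hmono z) hz
  have hulow' : u ∈ lowF R (addE H2 w y) := by
    rw [mem_lowF, hdeg u, if_neg (by push_neg; exact ⟨huv, huw⟩)]
    exact mem_lowF.1 hul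
  -- balls transfer
  have hballsub : ballF G u p ⊆ ballF (addE H2 w y) u p := by
    apply ballF_subset_of_adj
    intro a b hab haball hbball
    have hne : s(a, b) ≠ s(x, y) := by
      intro he
      rcases Sym2.eq_iff.1 he with ⟨rfl, -⟩ | ⟨-, rfl⟩
      · exact hxB (ballF_mono hp2 haball)
      · exact hxB (ballF_mono hp2 hbball)
    exact addE_adj.2 (Or.inl (addE_adj.2 (Or.inl (delE_adj.2 ⟨hab, hne⟩))))
  have hadjvx : (addE H2 w y).Adj v x :=
    addE_adj.2 (Or.inl (addE_adj.2 (Or.inr ⟨rfl, hxv.symm⟩)))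
  have hadjwy : (addE H2 w y).Adj w y := addE_adj.2 (Or.inr ⟨rfl, hyw.symm⟩)
  have hrec : addE (delE (delE (addE H2 w y) v x) w y) x y = G := by
    rw [hH2, hH1]
    exact recover_three hadjxy hvx hwy
  rw [htgt]
  exact ⟨hgood', hlowsub, hulow', hballsub hvball, hballsub hwball, hadjvx, hadjwy, hrec⟩


lemma card_movesB_ge {R p t : ℕ} [NeZero n] {G : SimpleGraph (Fin n)}
    (hgood : good R G) (hlow : (lowF R G).card < t) :
    (n - (t + 2 * (R + 1) ^ (2 * p))) * R ≤ (movesB R p G).card := by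
  classical
  set u := (wit R p G).1 with hu
  set K := (R + 1) ^ (2 * p) with hK
  set Bl := ballF G u (2 * p) with hBl
  have hKball : Bl.card ≤ K := card_ballF hgood u (2 * p)
  have hsplit : AP G ⊆ (movesB R p G ∪ (AP G).filter (fun q => q.1 ∈ Bl)) ∪
      (AP G).filter (fun q => q.2 ∈ Bl) := by
    intro q hq
    by_cases h1 : q.1 ∈ Bl
    · exact Finset.mem_union_left _ (Finset.mem_union_right _
        (Finset.mem_filter.2 ⟨hq, h1⟩))
    · by_cases h2 : q.2 ∈ Bl
      · exact Finset.mem_union_right _ (Finset.mem_filter.2 ⟨hq, h2⟩)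
      · exact Finset.mem_union_left _ (Finset.mem_union_left _
          (mem_movesB.2 ⟨mem_AP.1 hq, h1, h2⟩))
  have hc1 : ((AP G).filter (fun q => q.1 ∈ Bl)).card ≤ K * R := by
    have hsub : (AP G).filter (fun q => q.1 ∈ Bl) ⊆
        Bl.biUnion (fun a => (nbr G a).image (fun b => (a, b))) := by
      intro q hq
      obtain ⟨hq1, hq2⟩ := Finset.mem_filter.1 hq
      exact Finset.mem_biUnion.2 ⟨q.1, hq2, Finset.mem_image.2
        ⟨q.2, mem_nbr.2 (mem_AP.1 hq1), by simp⟩⟩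
    calc _ ≤ _ := Finset.card_le_card hsub
      _ ≤ ∑ a ∈ Bl, ((nbr G a).image (fun b => (a, b))).card := Finset.card_biUnion_le
      _ ≤ ∑ _a ∈ Bl, R := Finset.sum_le_sum (fun a _ => le_trans
          Finset.card_image_le (by have := hgood a; rw [degS_eq] at this; exact this))
      _ ≤ K * R := by
          rw [Finset.sum_const, smul_eq_mul]
          exact Nat.mul_le_mul_right _ hKball
  have hc2 : ((AP G).filter (fun q => q.2 ∈ Bl)).card ≤ K * R := by
    have hsub : (AP G).filter (fun q => q.2 ∈ Bl) ⊆
        Bl.biUnion (fun b => (nbr G b).image (fun a => (a, b))) := by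
      intro q hq
      obtain ⟨hq1, hq2⟩ := Finset.mem_filter.1 hq
      exact Finset.mem_biUnion.2 ⟨q.2, hq2, Finset.mem_image.2
        ⟨q.1, mem_nbr.2 (mem_AP.1 hq1).symm, by simp⟩⟩
    calc _ ≤ _ := Finset.card_le_card hsub
      _ ≤ ∑ b ∈ Bl, ((nbr G b).image (fun a => (a, b))).card := Finset.card_biUnion_le
      _ ≤ ∑ _b ∈ Bl, R := Finset.sum_le_sum (fun b _ => le_trans
          Finset.card_image_le (by have := hgood b; rw [degS_eq] at this; exact this))
      _ ≤ K * R := by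
          rw [Finset.sum_const, smul_eq_mul]
          exact Nat.mul_le_mul_right _ hKball
  have hAPle : (AP G).card ≤ ((movesB R p G).card + K * R) + K * R := by
    calc (AP G).card ≤ ((movesB R p G ∪ (AP G).filter (fun q => q.1 ∈ Bl)) ∪
          (AP G).filter (fun q => q.2 ∈ Bl)).card := Finset.card_le_card hsplit
      _ ≤ (movesB R p G ∪ (AP G).filter (fun q => q.1 ∈ Bl)).card +
          ((AP G).filter (fun q => q.2 ∈ Bl)).card := Finset.card_union_le _ _
      _ ≤ ((movesB R p G).card + ((AP G).filter (fun q => q.1 ∈ Bl)).card) +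
          ((AP G).filter (fun q => q.2 ∈ Bl)).card := by
          exact Nat.add_le_add_right (Finset.card_union_le _ _) _
      _ ≤ _ := by omega
  have hAPge : (n - t) * R ≤ (AP G).card := by
    refine le_trans ?_ (card_AP_ge (R := R) G)
    exact Nat.mul_le_mul_right _ (Nat.sub_le_sub_left (le_of_lt hlow) n)
  rw [Nat.sub_add_eq, Nat.sub_mul, mul_assoc]
  have h1 : (n - t) * R ≤ (movesB R p G).card + K * R + K * R := le_trans hAPge hAPle
  omega

noncomputable def TSet (R p : ℕ) (G' : SimpleGraph (Fin n)) :
    Finset (Fin n × Fin n × Fin n × Fin n × Fin n) :=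
  (lowF R G').biUnion (fun u => ((ballF G' u p) ×ˢ (ballF G' u p)).biUnion (fun q =>
    ((nbr G' q.1) ×ˢ (nbr G' q.2)).image (fun r => (u, q.1, q.2, r.1, r.2))))

lemma mem_TSet_intro {R p : ℕ} {G' : SimpleGraph (Fin n)} {u v w x y : Fin n}
    (hu : u ∈ lowF R G') (hv : v ∈ ballF G' u p) (hw : w ∈ ballF G' u p)
    (hx : x ∈ nbr G' v) (hy : y ∈ nbr G' w) : (u, v, w, x, y) ∈ TSet R p G' :=
  Finset.mem_biUnion.2 ⟨u, hu, Finset.mem_biUnion.2 ⟨(v, w),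
    Finset.mem_product.2 ⟨hv, hw⟩, Finset.mem_image.2 ⟨(x, y),
    Finset.mem_product.2 ⟨hx, hy⟩, rfl⟩⟩⟩

lemma card_TSet_le {R p t : ℕ} {G' : SimpleGraph (Fin n)} (hgood : good R G')
    (hlow : (lowF R G').card ≤ t) :
    (TSet R p G').card ≤ t * ((R + 1) ^ p * (R + 1) ^ p * (R * R)) := by
  classical
  have hnbr : ∀ z : Fin n, (nbr G' z).card ≤ R := by
    intro z; have := hgood z; rw [degS_eq] at this; exact this
  have hball : ∀ z : Fin n, (ballF G' z p).card ≤ (R + 1) ^ p :=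
    fun z => card_ballF hgood z p
  calc (TSet R p G').card ≤ ∑ u ∈ lowF R G',
        (((ballF G' u p) ×ˢ (ballF G' u p)).biUnion (fun q =>
          ((nbr G' q.1) ×ˢ (nbr G' q.2)).image
            (fun r => (u, q.1, q.2, r.1, r.2)))).card := Finset.card_biUnion_le
    _ ≤ ∑ _u ∈ lowF R G', (R + 1) ^ p * (R + 1) ^ p * (R * R) := by
        refine Finset.sum_le_sum (fun u _ => ?_)
        calc _ ≤ ∑ q ∈ (ballF G' u p) ×ˢ (ballF G' u p),
              (((nbr G' q.1) ×ˢ (nbr G' q.2)).image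
                (fun r => (u, q.1, q.2, r.1, r.2))).card := Finset.card_biUnion_le
          _ ≤ ∑ _q ∈ (ballF G' u p) ×ˢ (ballF G' u p), R * R := by
              refine Finset.sum_le_sum (fun q _ => ?_)
              calc _ ≤ ((nbr G' q.1) ×ˢ (nbr G' q.2)).card := Finset.card_image_le
                _ = (nbr G' q.1).card * (nbr G' q.2).card := Finset.card_product _ _
                _ ≤ R * R := Nat.mul_le_mul (hnbr _) (hnbr _)
          _ ≤ (R + 1) ^ p * (R + 1) ^ p * (R * R) := by
              rw [Finset.sum_const, smul_eq_mul, Finset.card_product]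
              exact Nat.mul_le_mul (Nat.mul_le_mul (hball _) (hball _)) le_rfl
    _ ≤ t * ((R + 1) ^ p * (R + 1) ^ p * (R * R)) := by
        rw [Finset.sum_const, smul_eq_mul]
        exact Nat.mul_le_mul_right _ hlow

lemma switchB (R p : ℕ) (hp : 1 ≤ p) (n t : ℕ) (hn : n ≠ 0) :
    (XB n R p t).card * ((n - (t + 2 * (R + 1) ^ (2 * p))) * R) ≤
      (GF n R).card * (t * ((R + 1) ^ p * (R + 1) ^ p * (R * R))) := by
  classical
  haveI : NeZero n := ⟨hn⟩
  set T : Finset (SimpleGraph (Fin n) × (Fin n × Fin n)) :=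
    (XB n R p t).biUnion (fun G => (movesB R p G).image (fun q => (G, q))) with hT
  have memT : ∀ c : SimpleGraph (Fin n) × (Fin n × Fin n),
      c ∈ T ↔ c.1 ∈ XB n R p t ∧ c.2 ∈ movesB R p c.1 := by
    intro c
    simp only [hT, Finset.mem_biUnion, Finset.mem_image]
    constructor
    · rintro ⟨G, hG, q, hq, rfl⟩; exact ⟨hG, hq⟩
    · rintro ⟨h1, h2⟩; exact ⟨c.1, h1, c.2, h2, rfl⟩
  have hXBel : ∀ G ∈ XB n R p t, good R G ∧ Bad R p G ∧ (lowF R G).card < t := by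
    intro G hG
    obtain ⟨hG1, hG2⟩ := Finset.mem_filter.1 hG
    exact ⟨(Finset.mem_filter.1 hG1).2, hG2.1, hG2.2⟩
  have hdc := dcount T (fun c => c.1) (fun c => tgtB R p c) (XB n R p t) (YB n R t)
    ((n - (t + 2 * (R + 1) ^ (2 * p))) * R)
    (t * ((R + 1) ^ p * (R + 1) ^ p * (R * R))) ?_ ?_ ?_
  · refine le_trans hdc (Nat.mul_le_mul_right _ (Finset.card_le_card ?_))
    exact Finset.filter_subset _ _
  · -- forward
    intro G hG
    obtain ⟨hgood, hbad, hlow⟩ := hXBel G hG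
    have hsub : (movesB R p G).image (fun q => (G, q)) ⊆
        T.filter (fun c => c.1 = G) := by
      intro c hc
      obtain ⟨q, hq, rfl⟩ := Finset.mem_image.1 hc
      exact Finset.mem_filter.2 ⟨(memT _).2 ⟨hG, hq⟩, rfl⟩
    calc _ ≤ (movesB R p G).card := card_movesB_ge hgood hlow
      _ = ((movesB R p G).image (fun q => (G, q))).card :=
          (Finset.card_image_of_injOn (fun q _ q' _ h => (Prod.ext_iff.1 h).2)).symm
      _ ≤ _ := Finset.card_le_card hsub
  · -- target
    rintro ⟨G, x, y⟩ hc
    obtain ⟨hG, hm⟩ := (memT _).1 hc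
    obtain ⟨hgood, hbad, hlow⟩ := hXBel G hG
    obtain ⟨hgood', hlowsub, -⟩ := factsB hp hgood hbad hm
    refine Finset.mem_filter.2 ⟨?_, ?_⟩
    · simp only [GF, Finset.mem_filter, Finset.mem_univ, true_and]
      exact hgood'
    · exact lt_of_le_of_lt (Finset.card_le_card hlowsub) hlow
  · -- fibers
    intro G' hG'
    obtain ⟨hG'1, hlow'⟩ := Finset.mem_filter.1 hG'
    have hgood' : good R G' := (Finset.mem_filter.1 hG'1).2
    refine le_trans (Finset.card_le_card_of_injOn (t := TSet R p G')
      (fun c => ((wit R p c.1).1, (wit R p c.1).2.1, (wit R p c.1).2.2, c.2.1, c.2.2))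
      ?_ ?_) (card_TSet_le hgood' (le_of_lt hlow'))
    · rintro ⟨G, x, y⟩ hc
      obtain ⟨hcT, htg⟩ := Finset.mem_filter.1 hc
      obtain ⟨hG, hm⟩ := (memT _).1 hcT
      obtain ⟨hgood, hbad, hlow⟩ := hXBel G hG
      obtain ⟨-, -, hu, hv, hw, hvx, hwy, -⟩ := factsB hp hgood hbad hm
      rw [htg] at hu hv hw hvx hwy
      exact mem_TSet_intro hu hv hw (mem_nbr.2 hvx) (mem_nbr.2 hwy)
    · rintro ⟨G₁, x₁, y₁⟩ hc₁ ⟨G₂, x₂, y₂⟩ hc₂ heq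
      simp only [Finset.coe_filter, Set.mem_setOf_eq] at hc₁ hc₂
      obtain ⟨hcT₁, htg₁⟩ := hc₁
      obtain ⟨hcT₂, htg₂⟩ := hc₂
      obtain ⟨hG₁, hm₁⟩ := (memT _).1 hcT₁
      obtain ⟨hG₂, hm₂⟩ := (memT _).1 hcT₂
      obtain ⟨hgood₁, hbad₁, -⟩ := hXBel _ hG₁
      obtain ⟨hgood₂, hbad₂, -⟩ := hXBel _ hG₂
      obtain ⟨-, -, -, -, -, -, -, hrec₁⟩ := factsB hp hgood₁ hbad₁ hm₁
      obtain ⟨-, -, -, -, -, -, -, hrec₂⟩ := factsB hp hgood₂ hbad₂ hm₂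
      simp only [Prod.mk.injEq] at heq
      obtain ⟨h1, h2, h3, h4, h5⟩ := heq
      simp only at hrec₁ hrec₂ htg₁ htg₂
      rw [htg₁] at hrec₁
      rw [htg₂] at hrec₂
      have hG12 : G₁ = G₂ := by
        rw [← hrec₁, ← hrec₂, h2, h3, h4, h5]
      simp only [Prod.mk.injEq]
      exact ⟨hG12, h4, h5⟩


/-! ### Relating `graphProp` to Finset counting -/

lemma denom_eq (n R : ℕ) :
    Nat.card {G : SimpleGraph (Fin n) // ∀ v, degS G v ≤ R} = (GF n R).card := by
  classical
  rw [Nat.card_eq_fintype_card, Fintype.card_subtype]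
  congr 1
  ext G
  simp [GF, good]

lemma numer_eq (n R : ℕ) (P : SimpleGraph (Fin n) → Prop) :
    Nat.card {G : SimpleGraph (Fin n) // (∀ v, degS G v ≤ R) ∧ P G} =
      ((GF n R).filter P).card := by
  classical
  rw [Nat.card_eq_fintype_card, Fintype.card_subtype]
  congr 1
  ext G
  simp [GF, good, and_assoc]

lemma graphProp_eq (n R : ℕ) (P : SimpleGraph (Fin n) → Prop) :
    graphProp n R P = (((GF n R).filter P).card : ℝ) / ((GF n R).card : ℝ) := by
  rw [graphProp, denom_eq, numer_eq]

lemma GF_card_pos (n R : ℕ) : 0 < (GF n R).card :=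
  Finset.card_pos.2 ⟨⊥, bot_mem_GF R⟩

lemma count_split (n R p t : ℕ) :
    ((GF n R).filter (Bad R p)).card ≤ (XA n R t).card + (XB n R p t).card := by
  classical
  refine le_trans (Finset.card_le_card ?_) (Finset.card_union_le _ _)
  intro G hG
  obtain ⟨hG1, hG2⟩ := Finset.mem_filter.1 hG
  by_cases h : t ≤ (lowF R G).card
  · exact Finset.mem_union_left _ (Finset.mem_filter.2 ⟨hG1, h⟩)
  · exact Finset.mem_union_right _ (Finset.mem_filter.2 ⟨hG1, hG2, by omega⟩)

set_option maxHeartbeats 1000000 in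
lemma main_est (R p : ℕ) (hR : 2 ≤ R) (hp : 1 ≤ p) {ε : ℝ} (hε : 0 < ε) :
    ∃ N : ℕ, ∀ n ≥ N, (((GF n R).filter (Bad R p)).card : ℝ) ≤
      ((GF n R).card : ℝ) * (ε / 2) := by
  classical
  set C : ℕ := (R + 1) ^ p * (R + 1) ^ p * (R * R) with hCdef
  set K₀ : ℕ := (R + 1) ^ (2 * p) with hK₀def
  set A : ℕ := 2 * R + 2 + ⌈Real.sqrt (8 * R / ε)⌉₊ with hAdef
  set M : ℕ := ⌈(16 * (A : ℝ) * C) / ε⌉₊ + 1 with hMdef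
  set S₀ : ℕ := 4 * A + 4 * K₀ + M + 1 with hSdef
  refine ⟨S₀ * S₀, fun n hn => ?_⟩
  set s := Nat.sqrt n with hsdef
  have hsS : S₀ ≤ s := Nat.le_sqrt.2 hn
  have hA2R : 2 * R + 2 ≤ A := by omega
  have hs1 : 1 ≤ s := le_trans (by omega) hsS
  set t := A * (s + 1) with htdef
  have hAt : A ≤ t := by
    rw [htdef]; exact Nat.le_mul_of_pos_right A (by omega)
  have ht2R : 2 * R ≤ t := by omega
  have htR : R ≤ t := by omega
  have ht1 : 1 ≤ t := by omega
  have hsn : s * s ≤ n := by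
    have := Nat.sqrt_le' n
    rwa [pow_two] at this
  have hns : n < (s + 1) * (s + 1) := Nat.lt_succ_sqrt n
  have htls : t ≤ 2 * A * s := by rw [htdef]; nlinarith
  have hcond2 : 2 * (t + 2 * K₀) ≤ n := by
    have h2 : (4 * A + 4 * K₀) * s ≤ s * s :=
      Nat.mul_le_mul_right s (by omega)
    nlinarith
  have hcond2' : t + 2 * K₀ ≤ n := by omega
  have hn1 : 1 ≤ n := by omega
  -- real facts
  have hRr : (2 : ℝ) ≤ (R : ℝ) := by exact_mod_cast hR
  have hD1 : (1 : ℝ) ≤ ((GF n R).card : ℝ) := by exact_mod_cast GF_card_pos n R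
  set D := ((GF n R).card : ℝ) with hDdef
  have hD0 : (0 : ℝ) ≤ D := by linarith
  have hAr : Real.sqrt (8 * R / ε) ≤ (A : ℝ) := by
    refine le_trans (Nat.le_ceil _) ?_
    exact_mod_cast (by omega : ⌈Real.sqrt (8 * R / ε)⌉₊ ≤ A)
  have hA2 : 8 * (R : ℝ) ≤ (A : ℝ) ^ 2 * ε := by
    have h0 : (0 : ℝ) ≤ 8 * R / ε := by positivity
    have hsq := Real.sq_sqrt h0
    have h1 : 8 * (R : ℝ) / ε ≤ (A : ℝ) ^ 2 := by
      have h2 := pow_le_pow_left₀ (Real.sqrt_nonneg (8 * R / ε)) hAr 2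
      rwa [hsq] at h2
    calc 8 * (R : ℝ) = (8 * R / ε) * ε := by field_simp
      _ ≤ (A : ℝ) ^ 2 * ε := mul_le_mul_of_nonneg_right h1 hε.le
  have hMr : 16 * (A : ℝ) * C ≤ (s : ℝ) * ε := by
    have h1 : (16 * (A : ℝ) * C) / ε ≤ (M : ℝ) := by
      rw [hMdef]
      push_cast
      linarith [Nat.le_ceil ((16 * (A : ℝ) * C) / ε)]
    have h2 : (M : ℝ) ≤ (s : ℝ) := by exact_mod_cast (by omega : M ≤ s)
    rw [div_le_iff₀ hε] at h1
    linarith [mul_le_mul_of_nonneg_right h2 hε.le]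
  -- casts of the counting lemmas
  have hXAr : ((XA n R t).card : ℝ) * ((t : ℝ) * ((t : ℝ) - (R : ℝ))) ≤
      D * ((n : ℝ) * (R : ℝ)) := by
    have hnat := switchA R n t
    rw [hDdef, show ((t : ℝ) - (R : ℝ)) = ((t - R : ℕ) : ℝ) from (Nat.cast_sub htR).symm]
    exact_mod_cast hnat
  have hXBr : ((XB n R p t).card : ℝ) *
      (((n : ℝ) - ((t : ℝ) + 2 * (K₀ : ℝ))) * (R : ℝ)) ≤ D * ((t : ℝ) * (C : ℝ)) := by
    have hnat := switchB R p hp n t (by omega)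
    rw [← hCdef, ← hK₀def] at hnat
    rw [hDdef, show ((n : ℝ) - ((t : ℝ) + 2 * (K₀ : ℝ))) = ((n - (t + 2 * K₀) : ℕ) : ℝ) from
      (by rw [Nat.cast_sub hcond2']; push_cast; ring)]
    exact_mod_cast hnat
  -- positivity of the factors
  have htr0 : (0 : ℝ) ≤ (t : ℝ) := Nat.cast_nonneg _
  have ht2Rr : 2 * (R : ℝ) ≤ (t : ℝ) := by exact_mod_cast ht2R
  have ht1r : (1 : ℝ) ≤ (t : ℝ) := by exact_mod_cast ht1
  have hX : (0 : ℝ) < (t : ℝ) * ((t : ℝ) - (R : ℝ)) :=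
    mul_pos (by linarith) (by linarith)
  have hcond2r : 2 * ((t : ℝ) + 2 * (K₀ : ℝ)) ≤ (n : ℝ) := by exact_mod_cast hcond2
  have hn1r : (1 : ℝ) ≤ (n : ℝ) := by exact_mod_cast hn1
  have hY : (0 : ℝ) < ((n : ℝ) - ((t : ℝ) + 2 * (K₀ : ℝ))) * (R : ℝ) := by
    have hK0r : (0 : ℝ) ≤ (K₀ : ℝ) := Nat.cast_nonneg _
    exact mul_pos (by linarith) (by linarith)
  -- core inequality 1
  have k1 : (n : ℝ) * (R : ℝ) ≤ (ε / 4) * ((t : ℝ) * ((t : ℝ) - (R : ℝ))) := by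
    have htr : (t : ℝ) = (A : ℝ) * ((s : ℝ) + 1) := by rw [htdef]; push_cast; ring
    have hnr : (n : ℝ) ≤ ((s : ℝ) + 1) * ((s : ℝ) + 1) := by
      have h' : (n : ℝ) < ((s : ℝ) + 1) * ((s : ℝ) + 1) := by exact_mod_cast hns
      linarith
    have hA0 : (0 : ℝ) ≤ (A : ℝ) := Nat.cast_nonneg _
    have hAA : (A : ℝ) ^ 2 * (n : ℝ) ≤ (t : ℝ) * (t : ℝ) := by
      rw [htr]
      have h := mul_le_mul_of_nonneg_left hnr (mul_nonneg hA0 hA0)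
      nlinarith [h]
    have st1 : (t : ℝ) * (t : ℝ) / 2 ≤ (t : ℝ) * ((t : ℝ) - (R : ℝ)) := by
      linarith [mul_nonneg htr0 (show (0 : ℝ) ≤ (t : ℝ) / 2 - (R : ℝ) by linarith)]
    have st2 : (A : ℝ) ^ 2 * (n : ℝ) / 2 ≤ (t : ℝ) * ((t : ℝ) - (R : ℝ)) := by linarith
    have st3 : 8 * (R : ℝ) * (n : ℝ) ≤ (A : ℝ) ^ 2 * ε * (n : ℝ) :=
      mul_le_mul_of_nonneg_right hA2 (Nat.cast_nonneg n)
    have st4 := mul_le_mul_of_nonneg_left st2 (by positivity : (0 : ℝ) ≤ ε / 4)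
    nlinarith [st3, st4]
  -- core inequality 2
  have k2 : (t : ℝ) * (C : ℝ) ≤
      (ε / 4) * ((((n : ℝ) - ((t : ℝ) + 2 * (K₀ : ℝ)))) * (R : ℝ)) := by
    have r1 : (n : ℝ) / 2 ≤ (n : ℝ) - ((t : ℝ) + 2 * (K₀ : ℝ)) := by linarith
    have r2 : (s : ℝ) * (s : ℝ) ≤ (n : ℝ) := by exact_mod_cast hsn
    have r3 : (t : ℝ) ≤ 2 * (A : ℝ) * (s : ℝ) := by exact_mod_cast htls
    have hC0 : (0 : ℝ) ≤ (C : ℝ) := Nat.cast_nonneg _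
    have hs0 : (0 : ℝ) ≤ (s : ℝ) := Nat.cast_nonneg _
    have hA0 : (0 : ℝ) ≤ (A : ℝ) := Nat.cast_nonneg _
    have u1 : (ε / 4) * ((n : ℝ) / 2) ≤
        (ε / 4) * ((n : ℝ) - ((t : ℝ) + 2 * (K₀ : ℝ))) :=
      mul_le_mul_of_nonneg_left r1 (by positivity)
    have u2 : (ε / 4) * ((n : ℝ) - ((t : ℝ) + 2 * (K₀ : ℝ))) ≤
        (ε / 4) * (((n : ℝ) - ((t : ℝ) + 2 * (K₀ : ℝ))) * (R : ℝ)) := by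
      have hXnn : (0 : ℝ) ≤ (n : ℝ) - ((t : ℝ) + 2 * (K₀ : ℝ)) := by linarith
      have h1R : (1 : ℝ) ≤ (R : ℝ) := by linarith
      have h := mul_le_mul_of_nonneg_left h1R
        (mul_nonneg (by positivity : (0 : ℝ) ≤ ε / 4) hXnn)
      nlinarith [h]
    have u3 : ε * ((s : ℝ) * (s : ℝ)) ≤ ε * (n : ℝ) :=
      mul_le_mul_of_nonneg_left r2 hε.le
    have u4 : (s : ℝ) * (16 * (A : ℝ) * (C : ℝ)) ≤ (s : ℝ) * ((s : ℝ) * ε) :=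
      mul_le_mul_of_nonneg_left hMr hs0
    have u5 : (t : ℝ) * (C : ℝ) ≤ (2 * (A : ℝ) * (s : ℝ)) * (C : ℝ) :=
      mul_le_mul_of_nonneg_right r3 hC0
    linarith [u1, u2, u3, u4, u5]
  -- conclude for XA
  have ha : ((XA n R t).card : ℝ) ≤ D * (ε / 4) := by
    have h := hXAr.trans (by
      calc D * ((n : ℝ) * (R : ℝ)) ≤
            D * ((ε / 4) * ((t : ℝ) * ((t : ℝ) - (R : ℝ)))) :=
            mul_le_mul_of_nonneg_left k1 hD0
        _ = (D * (ε / 4)) * ((t : ℝ) * ((t : ℝ) - (R : ℝ))) := by ring)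
    exact le_of_mul_le_mul_right h hX
  have hb : ((XB n R p t).card : ℝ) ≤ D * (ε / 4) := by
    have h := hXBr.trans (by
      calc D * ((t : ℝ) * (C : ℝ)) ≤
            D * ((ε / 4) * ((((n : ℝ) - ((t : ℝ) + 2 * (K₀ : ℝ)))) * (R : ℝ))) :=
            mul_le_mul_of_nonneg_left k2 hD0
        _ = (D * (ε / 4)) * ((((n : ℝ) - ((t : ℝ) + 2 * (K₀ : ℝ)))) * (R : ℝ)) := by
            ring)
    exact le_of_mul_le_mul_right h hY
  have hsplit : (((GF n R).filter (Bad R p)).card : ℝ) ≤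
      ((XA n R t).card : ℝ) + ((XB n R p t).card : ℝ) := by
    exact_mod_cast count_split n R p t
  linarith

end S13

theorem stmt13 (R : ℕ) (hR : 2 ≤ R) (p : ℕ) (hp : 0 < p) :
    Tendsto (fun n : ℕ => graphProp n R (fun G =>
        ∃ v₁ v₂ v₃ : Fin n, v₁ ≠ v₂ ∧ v₁ ≠ v₃ ∧ v₂ ≠ v₃ ∧
          degS G v₁ < R ∧ degS G v₂ < R ∧ degS G v₃ < R ∧
          (∃ w : G.Walk v₁ v₂, w.IsPath ∧ w.length ≤ p) ∧
          (∃ w : G.Walk v₁ v₃, w.IsPath ∧ w.length ≤ p) ∧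
          (∃ w : G.Walk v₂ v₃, w.IsPath ∧ w.length ≤ p)))
      atTop (𝓝 0) := by
  classical
  rw [Metric.tendsto_atTop]
  intro ε hε
  obtain ⟨N, hN⟩ := S13.main_est R p hR hp hε
  refine ⟨N, fun n hn => ?_⟩
  have hD0 : (0 : ℝ) < ((S13.GF n R).card : ℝ) := by
    exact_mod_cast S13.GF_card_pos n R
  have hmain := hN n hn
  have heq : graphProp n R (fun G =>
      ∃ v₁ v₂ v₃ : Fin n, v₁ ≠ v₂ ∧ v₁ ≠ v₃ ∧ v₂ ≠ v₃ ∧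
        degS G v₁ < R ∧ degS G v₂ < R ∧ degS G v₃ < R ∧
        (∃ w : G.Walk v₁ v₂, w.IsPath ∧ w.length ≤ p) ∧
        (∃ w : G.Walk v₁ v₃, w.IsPath ∧ w.length ≤ p) ∧
        (∃ w : G.Walk v₂ v₃, w.IsPath ∧ w.length ≤ p)) =
      (((S13.GF n R).filter (S13.Bad R p)).card : ℝ) / ((S13.GF n R).card : ℝ) :=
    S13.graphProp_eq n R (S13.Bad R p)
  rw [Real.dist_eq, sub_zero, heq, abs_of_nonneg (by positivity)]
  rw [div_lt_iff₀ hD0]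
  nlinarith [mul_pos hD0 hε]
end
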